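/- arXiv:0911.4365 — 4 statements merged into one kernel-verified Lean document; each statement's English description precedes it below -/
import Mathlib

section
/- Let A : (0,∞) → (0,∞) be continuous, integrable in a neighborhood of zero but not integrable in a neighborhood of infinity. If Φ₁ and Φ₂ are both bounded continuous functions from [0,∞) to ℝ, twice differentiable on (0,∞), with Φ₁(0) = Φ₂(0) = 1 and Φᵢ''(t) = A(t)Φᵢ(t) for all t > 0 (i = 1,2), then Φ₁ = Φ₂. -/
open MeasureTheory Filter Set

/-- Hypotheses on the coefficient `A` of the Sturm–Liouville equation: continuous and
strictly positive on `(0,∞)`, integrable in a neighborhood of zero, but not integrable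
in a neighborhood of infinity. -/
def SLHyp (A : ℝ → ℝ) : Prop :=
  ContinuousOn A (Set.Ioi 0) ∧ (∀ t > (0:ℝ), 0 < A t) ∧
  MeasureTheory.IntegrableOn A (Set.Ioc 0 1) ∧
  (∫⁻ t in Set.Ici (1:ℝ), ENNReal.ofReal (A t)) = ⊤

/-- `Φ` is a bounded continuous function on `[0,∞)` with `Φ 0 = 1`, twice differentiable on
`(0,∞)` and satisfying the Sturm–Liouville equation `Φ'' = A Φ` there. -/
def IsSL (A Φ : ℝ → ℝ) : Prop :=
  ContinuousOn Φ (Set.Ici 0) ∧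
  (∃ M : ℝ, ∀ t ≥ (0:ℝ), |Φ t| ≤ M) ∧
  Φ 0 = 1 ∧
  (∀ t > (0:ℝ), DifferentiableAt ℝ Φ t) ∧
  (∀ t > (0:ℝ), HasDerivAt (deriv Φ) (A t * Φ t) t)

/-- Key lemma: a bounded function vanishing at `0` satisfying `ψ'' = A ψ` with `A > 0`
on `(0,∞)` is nonpositive on `[0,∞)`. -/
lemma key_nonpos (A ψ : ℝ → ℝ) (hApos : ∀ t > (0:ℝ), 0 < A t)
    (hcont : ContinuousOn ψ (Set.Ici 0))
    (hbdd : ∃ M : ℝ, ∀ t ≥ (0:ℝ), ψ t ≤ M)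
    (hψ0 : ψ 0 = 0)
    (hdiff : ∀ t > (0:ℝ), DifferentiableAt ℝ ψ t)
    (hdd : ∀ t > (0:ℝ), HasDerivAt (deriv ψ) (A t * ψ t) t) :
    ∀ t ≥ (0:ℝ), ψ t ≤ 0 := by
  by_contra hcon
  push_neg at hcon
  obtain ⟨t₀, ht₀0, ht₀pos⟩ := hcon
  have ht₀ : 0 < t₀ := by
    rcases eq_or_lt_of_le ht₀0 with h | h
    · exfalso; rw [← h, hψ0] at ht₀pos; exact lt_irrefl 0 ht₀pos
    · exact h
  -- the last point before `t₀` where `ψ ≤ 0`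
  set S : Set ℝ := Set.Icc 0 t₀ ∩ ψ ⁻¹' Set.Iic 0 with hS
  have hScl : IsClosed S :=
    (hcont.mono Set.Icc_subset_Ici_self).preimage_isClosed_of_isClosed isClosed_Icc isClosed_Iic
  have hScp : IsCompact S := isCompact_Icc.of_isClosed_subset hScl Set.inter_subset_left
  have hSne : S.Nonempty := ⟨0, ⟨le_refl 0, le_of_lt ht₀⟩, by simp [hψ0]⟩
  set a := sSup S with ha
  have haS : a ∈ S := hScp.sSup_mem hSne
  have ha0 : 0 ≤ a := haS.1.1
  have hat₀ : a ≤ t₀ := haS.1.2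
  have hψa : ψ a ≤ 0 := haS.2
  have halt : a < t₀ := lt_of_le_of_ne hat₀ (fun h => by rw [h] at hψa; linarith)
  have hpos : ∀ s, a < s → s ≤ t₀ → 0 < ψ s := by
    intro s hs1 hs2
    by_contra hns
    push_neg at hns
    have hsS : s ∈ S := ⟨⟨le_trans ha0 hs1.le, hs2⟩, hns⟩
    exact absurd (le_csSup hScp.bddAbove hsS) (not_le.mpr hs1)
  -- Mean value theorem on `[a, t₀]`
  obtain ⟨c, hc, hcs⟩ := exists_hasDerivAt_eq_slope ψ (deriv ψ) halt
    (hcont.mono (Set.Icc_subset_Ici_self.trans (Set.Ici_subset_Ici.mpr ha0)))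
    (fun x hx => (hdiff x (lt_of_le_of_lt ha0 hx.1)).hasDerivAt)
  have hc0 : 0 < c := lt_of_le_of_lt ha0 hc.1
  have hψc : 0 < ψ c := hpos c hc.1 hc.2.le
  obtain ⟨m, hm⟩ : ∃ m : ℝ, m = deriv ψ c := ⟨_, rfl⟩
  have hmpos : 0 < m := by
    rw [hm, hcs]
    apply div_pos <;> linarith
  -- claim: `deriv ψ ≥ m` on `[c, ∞)`
  have hkey : ∀ t, c ≤ t → m ≤ deriv ψ t := by
    by_contra hB
    push_neg at hB
    obtain ⟨x₀, hx₀c, hx₀⟩ := hB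
    set B : Set ℝ := {t | c ≤ t ∧ deriv ψ t < m} with hBdef
    have hBne : B.Nonempty := ⟨x₀, hx₀c, hx₀⟩
    have hBbdd : BddBelow B := ⟨c, fun x hx => hx.1⟩
    set b := sInf B with hb
    have hcb : c ≤ b := le_csInf hBne (fun x hx => hx.1)
    have hb0 : 0 < b := lt_of_lt_of_le hc0 hcb
    have hlow : ∀ x, c ≤ x → x < b → m ≤ deriv ψ x := by
      intro x hx1 hx2
      by_contra hx
      push_neg at hx
      exact absurd (csInf_le hBbdd ⟨hx1, hx⟩) (not_le.mpr hx2)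
    have hclA : ContinuousAt (deriv ψ) b := (hdd b hb0).differentiableAt.continuousAt
    -- `deriv ψ b ≥ m` by continuity from the left
    have hge : m ≤ deriv ψ b := by
      rcases eq_or_lt_of_le hcb with h | h
      · rw [← h, ← hm]
      · have hmem : b ∈ closure (Set.Ico c b) := by
          rw [closure_Ico (ne_of_lt h)]; exact ⟨hcb, le_refl b⟩
        haveI hnb : (nhdsWithin b (Set.Ico c b)).NeBot :=
          mem_closure_iff_nhdsWithin_neBot.mp hmem
        refine ge_of_tendsto
          (hclA.tendsto.mono_left (nhdsWithin_le_nhds (s := Set.Ico c b))) ?_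
        filter_upwards [self_mem_nhdsWithin] with x hx
        exact hlow x hx.1 hx.2
    -- `ψ b > 0` since `ψ` is increasing on `[c, b]`
    have hψb : 0 < ψ b := by
      rcases eq_or_lt_of_le hcb with h | h
      · rw [← h]; exact hψc
      · have hmono : StrictMonoOn ψ (Set.Icc c b) := by
          apply strictMonoOn_of_deriv_pos (convex_Icc c b)
            (hcont.mono (Set.Icc_subset_Ici_self.trans (Set.Ici_subset_Ici.mpr hc0.le)))
          intro x hx
          rw [interior_Icc] at hx
          exact lt_of_lt_of_le hmpos (hlow x hx.1.le hx.2)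
        have := hmono ⟨le_refl c, h.le⟩ ⟨h.le, le_refl b⟩ h
        linarith
    -- `deriv ψ` has positive derivative at `b`, so it increases just to the right of `b`
    have hAb : 0 < A b * ψ b := mul_pos (hApos b hb0) hψb
    have hslope := hasDerivAt_iff_tendsto_slope.mp (hdd b hb0)
    have hev : ∀ᶠ x in nhdsWithin b {b}ᶜ, 0 < slope (deriv ψ) b x :=
      hslope.eventually (eventually_gt_nhds hAb)
    -- every element of `B` is `> b`
    have hbnotB : b ∉ B := fun hbB => absurd hge (not_le.mpr hbB.2)
    have hBsub : B ⊆ Set.Ioi b := by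
      intro x hx
      rcases lt_or_eq_of_le (csInf_le hBbdd hx) with h | h
      · exact h
      · exfalso; apply hbnotB; rw [hb, h]; exact hx
    have hbcl : b ∈ closure B := csInf_mem_closure hBne hBbdd
    have hnB : (nhdsWithin b B).NeBot := mem_closure_iff_nhdsWithin_neBot.mp hbcl
    have hBle : nhdsWithin b B ≤ nhdsWithin b {b}ᶜ :=
      nhdsWithin_mono b (fun x hx => ne_of_gt (hBsub hx))
    have hev2 : ∀ᶠ x in nhdsWithin b B, 0 < slope (deriv ψ) b x := hev.filter_mono hBle
    obtain ⟨x, hxB, hxs⟩ := (hev2.and self_mem_nhdsWithin).exists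
    -- contradiction: `deriv ψ x < m` but the slope is positive and `deriv ψ b ≥ m`
    have hxb : b < x := hBsub hxs
    have : 0 < (deriv ψ x - deriv ψ b) / (x - b) := by
      simpa [slope_def_field, div_eq_iff] using hxB
    have hgt : deriv ψ b < deriv ψ x := by
      have hxbpos : 0 < x - b := by linarith
      nlinarith [mul_pos this hxbpos, div_mul_cancel₀ (deriv ψ x - deriv ψ b) (ne_of_gt hxbpos)]
    exact absurd hxs.2 (not_lt.mpr (le_trans hge hgt.le))
  -- now `ψ` grows at least linearly, contradicting boundedness
  obtain ⟨M, hM⟩ := hbdd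
  set T : ℝ := max c (c + (M - ψ c) / m + 1) with hT
  have hcT : c ≤ T := le_max_left _ _
  have hT0 : 0 ≤ T := le_trans hc0.le hcT
  have hgrow : ψ c + m * (T - c) ≤ ψ T := by
    have hmono : MonotoneOn (fun t => ψ t - m * t) (Set.Ici c) := by
      apply monotoneOn_of_deriv_nonneg (convex_Ici c)
      · exact (hcont.mono (Set.Ici_subset_Ici.mpr hc0.le)).sub
          ((continuous_const.mul continuous_id).continuousOn)
      · intro x hx
        rw [interior_Ici] at hx
        exact ((hdiff x (lt_trans hc0 hx)).sub
          ((differentiableAt_id.const_mul m))).differentiableWithinAt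
      · intro x hx
        rw [interior_Ici] at hx
        have hdx : DifferentiableAt ℝ ψ x := hdiff x (lt_trans hc0 hx)
        have hda : HasDerivAt (fun t => ψ t - m * t) (deriv ψ x - m * 1) x :=
          hdx.hasDerivAt.sub ((hasDerivAt_id x).const_mul m)
        rw [hda.deriv]
        linarith [hkey x hx.le]
    have := hmono (Set.self_mem_Ici) (Set.mem_Ici.mpr hcT) hcT
    simp only at this
    linarith
  have hTle : ψ T ≤ M := hM T hT0
  have hTge : c + (M - ψ c) / m + 1 ≤ T := le_max_right _ _
  have hmul : m * ((M - ψ c) / m) = M - ψ c := by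
    field_simp
  nlinarith [mul_le_mul_of_nonneg_left (by linarith : (M - ψ c) / m + 1 ≤ T - c) hmpos.le]

/-- Comparison half of the uniqueness theorem. -/
lemma sl_le (A : ℝ → ℝ) (hApos : ∀ t > (0:ℝ), 0 < A t)
    (Φ₁ Φ₂ : ℝ → ℝ) (h1 : IsSL A Φ₁) (h2 : IsSL A Φ₂) :
    ∀ t ≥ (0:ℝ), Φ₁ t ≤ Φ₂ t := by
  obtain ⟨h1c, ⟨M₁, h1b⟩, h10, h1d, h1dd⟩ := h1
  obtain ⟨h2c, ⟨M₂, h2b⟩, h20, h2d, h2dd⟩ := h2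
  have hkey := key_nonpos A (fun t => Φ₁ t - Φ₂ t) hApos
    (h1c.sub h2c)
    ⟨M₁ + M₂, fun t ht => by
      have ha1 := abs_le.mp (h1b t ht)
      have ha2 := abs_le.mp (h2b t ht)
      show Φ₁ t - Φ₂ t ≤ M₁ + M₂
      linarith⟩
    (by simp [h10, h20])
    (fun t ht => (h1d t ht).sub (h2d t ht))
    (by
      intro t ht
      have heq : (fun s => deriv Φ₁ s - deriv Φ₂ s) =ᶠ[nhds t]
          deriv (fun s => Φ₁ s - Φ₂ s) := by
        filter_upwards [Ioi_mem_nhds ht] with s hs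
        rw [deriv_fun_sub (h1d s hs) (h2d s hs)]
      have h := (h1dd t ht).sub (h2dd t ht)
      have h' := h.congr_of_eventuallyEq heq.symm
      have hval : A t * (Φ₁ t - Φ₂ t) = A t * Φ₁ t - A t * Φ₂ t := by ring
      exact hval ▸ h')
  intro t ht
  exact sub_nonpos.mp (hkey t ht)

theorem uniqueness_of_sturm_liouville_solution (A : ℝ → ℝ) (hA : SLHyp A)
    (Φ₁ Φ₂ : ℝ → ℝ) (h1 : IsSL A Φ₁) (h2 : IsSL A Φ₂) :
    ∀ t ≥ (0:ℝ), Φ₁ t = Φ₂ t := by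
  intro t ht
  exact le_antisymm (sl_le A hA.2.1 Φ₁ Φ₂ h1 h2 t ht) (sl_le A hA.2.1 Φ₂ Φ₁ h2 h1 t ht)
end

section
/- Let A₁, A₂ : (0,∞) → (0,∞) be continuous, integrable in a neighborhood of zero but not integrable in a neighborhood of infinity, and suppose A₁(t) ≥ A₂(t) for all t > 0. Then |Φ_{A₁}'(0)| ≥ |Φ_{A₂}'(0)|, where Φ_{Aᵢ}'(0) denotes the derivative at 0 of Φ_{Aᵢ}. -/
open MeasureTheory Filter Set
open Topology

namespace SLaux
variable {A Φ : ℝ → ℝ}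




lemma contDeriv (hode : ∀ t > (0:ℝ), HasDerivAt (deriv Φ) (A t * Φ t) t) :
    ContinuousOn (deriv Φ) (Ioi 0) := fun t ht =>
  ((hode t ht).differentiableAt.continuousAt).continuousWithinAt

lemma contPhi (hdiff : ∀ t > (0:ℝ), DifferentiableAt ℝ Φ t) :
    ContinuousOn Φ (Ioi 0) := fun t ht =>
  ((hdiff t ht).continuousAt).continuousWithinAt

/-- FTC for `Φ`. -/
lemma ftc1 (hdiff : ∀ t > (0:ℝ), DifferentiableAt ℝ Φ t)
    (hode : ∀ t > (0:ℝ), HasDerivAt (deriv Φ) (A t * Φ t) t)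
    {a b : ℝ} (ha : 0 < a) (hab : a ≤ b) :
    ∫ t in a..b, deriv Φ t = Φ b - Φ a := by
  apply intervalIntegral.integral_eq_sub_of_hasDerivAt
  · intro x hx
    rw [uIcc_of_le hab] at hx
    exact (hdiff x (lt_of_lt_of_le ha hx.1)).hasDerivAt
  · apply ContinuousOn.intervalIntegrable
    apply (contDeriv hode).mono
    rw [uIcc_of_le hab]
    intro x hx; exact lt_of_lt_of_le ha hx.1

/-- FTC for `deriv Φ`. -/
lemma ftc2 (hAc : ContinuousOn A (Ioi 0))
    (hdiff : ∀ t > (0:ℝ), DifferentiableAt ℝ Φ t)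
    (hode : ∀ t > (0:ℝ), HasDerivAt (deriv Φ) (A t * Φ t) t)
    {a b : ℝ} (ha : 0 < a) (hab : a ≤ b) :
    ∫ t in a..b, A t * Φ t = deriv Φ b - deriv Φ a := by
  have hsub : uIcc a b ⊆ Ioi 0 := by
    rw [uIcc_of_le hab]; intro x hx; exact lt_of_lt_of_le ha hx.1
  apply intervalIntegral.integral_eq_sub_of_hasDerivAt
  · intro x hx
    exact hode x (hsub hx)
  · exact ((hAc.mono hsub).mul ((contPhi hdiff).mono hsub)).intervalIntegrable


/-- The integral of `A` from any `a > 0` is unbounded. -/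
lemma intA_big (hAc : ContinuousOn A (Ioi 0)) (hApos : ∀ t > (0:ℝ), 0 < A t)
    (hAtop : (∫⁻ t in Set.Ici (1:ℝ), ENNReal.ofReal (A t)) = ⊤)
    {a : ℝ} (ha : 0 < a) (C : ℝ) : ∃ b, a ≤ b ∧ C ≤ ∫ t in a..b, A t := by
  by_contra hcon
  push_neg at hcon
  -- then A is integrable on Ioi a
  have hfi : ∀ i : ℝ, IntegrableOn A (Ioc a i) := by
    intro i
    rcases le_or_gt i a with h | h
    · rw [Ioc_eq_empty (by exact not_lt.mpr h)]; exact integrableOn_empty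
    · have : IntegrableOn A (Icc a i) := by
        apply ContinuousOn.integrableOn_compact isCompact_Icc
        exact hAc.mono (fun x hx => lt_of_lt_of_le ha hx.1)
      exact this.mono_set Ioc_subset_Icc_self
  have hInt : IntegrableOn A (Ioi a) := by
    apply integrableOn_Ioi_of_intervalIntegral_norm_bounded C a hfi tendsto_id
    filter_upwards [eventually_ge_atTop a] with i hi
    have : (∫ x in a..i, ‖A x‖) = ∫ x in a..i, A x := by
      apply intervalIntegral.integral_congr
      intro x hx
      rw [uIcc_of_le hi] at hx
      exact abs_of_pos (hApos x (lt_of_lt_of_le ha hx.1))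
    rw [this]
    exact le_of_lt (hcon i hi)
  have hfin : (∫⁻ t in Ioi a, ENNReal.ofReal (A t)) < ⊤ :=
    lt_of_le_of_lt (lintegral_ofReal_le_lintegral_enorm _) hInt.2
  -- but the lintegral over Ici 1 is ⊤
  have hIci : (∫⁻ t in Set.Ici (1:ℝ), ENNReal.ofReal (A t)) < ⊤ := by
    rcases le_or_gt a 1 with h | h
    · have h1 : (∫⁻ t in Set.Ici (1:ℝ), ENNReal.ofReal (A t))
          = ∫⁻ t in Set.Ioi (1:ℝ), ENNReal.ofReal (A t) := by
        rw [Measure.restrict_congr_set Ioi_ae_eq_Ici.symm]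
      rw [h1]
      exact lt_of_le_of_lt (lintegral_mono_set (Ioi_subset_Ioi h)) hfin
    · have hsplit : Set.Ici (1:ℝ) ⊆ Icc 1 a ∪ Ioi a := by
        intro x hx
        rcases le_or_gt x a with h' | h'
        · exact Or.inl ⟨hx, h'⟩
        · exact Or.inr h'
      have hIcc : IntegrableOn A (Icc 1 a) := by
        apply ContinuousOn.integrableOn_compact isCompact_Icc
        exact hAc.mono (fun x hx => lt_of_lt_of_le one_pos hx.1)
      have hIccfin : (∫⁻ t in Icc 1 a, ENNReal.ofReal (A t)) < ⊤ :=
        lt_of_le_of_lt (lintegral_ofReal_le_lintegral_enorm _) hIcc.2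
      calc (∫⁻ t in Set.Ici (1:ℝ), ENNReal.ofReal (A t))
          ≤ ∫⁻ t in Icc 1 a ∪ Ioi a, ENNReal.ofReal (A t) := lintegral_mono_set hsplit
        _ ≤ (∫⁻ t in Icc 1 a, ENNReal.ofReal (A t))
            + ∫⁻ t in Ioi a, ENNReal.ofReal (A t) := lintegral_union_le _ _ _
        _ < ⊤ := ENNReal.add_lt_top.mpr ⟨hIccfin, hfin⟩
  rw [hAtop] at hIci
  exact lt_irrefl _ hIci

/-- If `Φ` solves the ODE, is bounded, and at some positive point is positive with
nonnegative derivative, we get a contradiction (blow-up). -/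
lemma lemB (hAc : ContinuousOn A (Ioi 0)) (hApos : ∀ t > (0:ℝ), 0 < A t)
    (hAtop : (∫⁻ t in Set.Ici (1:ℝ), ENNReal.ofReal (A t)) = ⊤)
    (hdiff : ∀ t > (0:ℝ), DifferentiableAt ℝ Φ t)
    (hode : ∀ t > (0:ℝ), HasDerivAt (deriv Φ) (A t * Φ t) t)
    {M : ℝ} (hM : ∀ t ≥ (0:ℝ), |Φ t| ≤ M)
    {t₀ : ℝ} (ht₀ : 0 < t₀) (hΦ : 0 < Φ t₀) (hΦ' : 0 ≤ deriv Φ t₀) : False := by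
  have hIccIoi : ∀ {u : ℝ}, Icc t₀ u ⊆ Ioi 0 := fun hx => lt_of_lt_of_le ht₀ hx.1
  -- Monotonicity of `deriv Φ` on intervals where `Φ > 0`
  have mono_of_pos : ∀ u, t₀ ≤ u → (∀ t ∈ Ico t₀ u, 0 < Φ t) →
      MonotoneOn (deriv Φ) (Icc t₀ u) := by
    intro u hu hup
    apply monotoneOn_of_deriv_nonneg (convex_Icc _ _)
    · exact (contDeriv hode).mono hIccIoi
    · rw [interior_Icc]
      intro x hx
      exact (hode x (ht₀.trans hx.1)).differentiableAt.differentiableWithinAt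
    · rw [interior_Icc]
      intro x hx
      rw [(hode x (ht₀.trans hx.1)).deriv]
      exact le_of_lt (mul_pos (hApos x (ht₀.trans hx.1)) (hup x ⟨le_of_lt hx.1, hx.2⟩))
  -- Φ stays positive for t ≥ t₀
  have pos : ∀ t, t₀ ≤ t → 0 < Φ t := by
    intro b hb
    by_contra hneg
    push_neg at hneg
    set E := Icc t₀ b ∩ Φ ⁻¹' (Iic 0) with hE
    have hEclosed : IsClosed E :=
      ContinuousOn.preimage_isClosed_of_isClosed
        ((contPhi hdiff).mono hIccIoi) isClosed_Icc isClosed_Iic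
    have hEne : E.Nonempty := ⟨b, ⟨⟨hb, le_rfl⟩, hneg⟩⟩
    have hEbdd : BddBelow E := ⟨t₀, fun x hx => hx.1.1⟩
    have huE : sInf E ∈ E := hEclosed.csInf_mem hEne hEbdd
    set u := sInf E
    have huΦ : Φ u ≤ 0 := huE.2
    have hut₀ : t₀ < u := by
      rcases lt_or_eq_of_le huE.1.1 with h | h
      · exact h
      · exfalso; rw [← h] at huΦ; linarith
    have hpos' : ∀ t ∈ Ico t₀ u, 0 < Φ t := by
      intro t ht
      by_contra hle
      push_neg at hle
      have htE : t ∈ E := ⟨⟨ht.1, le_trans (le_of_lt ht.2) huE.1.2⟩, hle⟩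
      exact absurd (csInf_le hEbdd htE) (not_le.mpr ht.2)
    have hmono := mono_of_pos u (le_of_lt hut₀) hpos'
    have hΦmono : MonotoneOn Φ (Icc t₀ u) := by
      apply monotoneOn_of_deriv_nonneg (convex_Icc _ _)
      · exact (contPhi hdiff).mono hIccIoi
      · rw [interior_Icc]
        intro x hx
        exact (hdiff x (ht₀.trans hx.1)).differentiableWithinAt
      · rw [interior_Icc]
        intro x hx
        calc (0:ℝ) ≤ deriv Φ t₀ := hΦ'
          _ ≤ deriv Φ x := hmono ⟨le_rfl, le_of_lt hut₀⟩
              ⟨le_of_lt hx.1, le_of_lt hx.2⟩ (le_of_lt hx.1)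
    have := hΦmono ⟨le_rfl, le_of_lt hut₀⟩ ⟨le_of_lt hut₀, le_rfl⟩ (le_of_lt hut₀)
    linarith
  -- global monotonicity of deriv Φ and Φ on [t₀, ∞)
  have dmono : ∀ b, t₀ ≤ b → MonotoneOn (deriv Φ) (Icc t₀ b) :=
    fun b hb => mono_of_pos b hb (fun t ht => pos t ht.1)
  have dnonneg : ∀ t, t₀ ≤ t → 0 ≤ deriv Φ t := fun t ht =>
    le_trans hΦ' (dmono t ht ⟨le_rfl, ht⟩ ⟨ht, le_rfl⟩ ht)
  have Φmono : ∀ b, t₀ ≤ b → MonotoneOn Φ (Icc t₀ b) := by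
    intro b hb
    apply monotoneOn_of_deriv_nonneg (convex_Icc _ _)
    · exact (contPhi hdiff).mono hIccIoi
    · rw [interior_Icc]
      intro x hx
      exact (hdiff x (ht₀.trans hx.1)).differentiableWithinAt
    · rw [interior_Icc]
      intro x hx
      exact dnonneg x (le_of_lt hx.1)
  have Φge : ∀ t, t₀ ≤ t → Φ t₀ ≤ Φ t := fun t ht =>
    Φmono t ht ⟨le_rfl, ht⟩ ⟨ht, le_rfl⟩ ht
  -- pick T with large integral of A
  obtain ⟨T, hT1, hTC⟩ := intA_big hAc hApos hAtop ht₀ (1 / Φ t₀)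
  have hTpos : 0 < T := lt_of_lt_of_le ht₀ hT1
  have derivT : 1 ≤ deriv Φ T := by
    have int2 : IntervalIntegrable (fun t => A t * Φ t) volume t₀ T := by
      apply ContinuousOn.intervalIntegrable
      have hsub : uIcc t₀ T ⊆ Ioi 0 := by
        rw [uIcc_of_le hT1]; exact hIccIoi
      exact (hAc.mono hsub).mul ((contPhi hdiff).mono hsub)
    have int1 : IntervalIntegrable (fun t => Φ t₀ * A t) volume t₀ T := by
      apply ContinuousOn.intervalIntegrable
      have hsub : uIcc t₀ T ⊆ Ioi 0 := by
        rw [uIcc_of_le hT1]; exact hIccIoi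
      exact continuousOn_const.mul (hAc.mono hsub)
    have h2 : (∫ t in t₀..T, Φ t₀ * A t) ≤ ∫ t in t₀..T, A t * Φ t := by
      apply intervalIntegral.integral_mono_on hT1 int1 int2
      intro x hx
      have hAx := hApos x (lt_of_lt_of_le ht₀ hx.1)
      have := Φge x hx.1
      nlinarith
    have h3 : (∫ t in t₀..T, Φ t₀ * A t) = Φ t₀ * ∫ t in t₀..T, A t :=
      intervalIntegral.integral_const_mul _ _
    have h4 : (∫ t in t₀..T, A t * Φ t) = deriv Φ T - deriv Φ t₀ :=
      ftc2 hAc hdiff hode ht₀ hT1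
    have h5 : 1 ≤ Φ t₀ * ∫ t in t₀..T, A t := by
      have := (div_le_iff₀ hΦ).mp hTC
      nlinarith
    nlinarith
  -- now Φ grows at least linearly, contradiction with boundedness
  have hM0 : 0 ≤ M := le_trans (abs_nonneg _) (hM t₀ (le_of_lt ht₀))
  set b := T + 2 * M + 1 with hb
  have hTb : T ≤ b := by simp only [hb]; linarith
  have hder_ge : ∀ x ∈ Icc T b, (1:ℝ) ≤ deriv Φ x := by
    intro x hx
    exact le_trans derivT
      (dmono b (le_trans hT1 hTb) ⟨hT1, hx.1.trans hx.2⟩ ⟨le_trans hT1 hx.1, hx.2⟩ hx.1)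
  have h6 : (∫ t in T..b, (1:ℝ)) ≤ ∫ t in T..b, deriv Φ t := by
    apply intervalIntegral.integral_mono_on hTb intervalIntegrable_const _ hder_ge
    apply ContinuousOn.intervalIntegrable
    apply (contDeriv hode).mono
    rw [uIcc_of_le hTb]
    intro x hx; exact lt_of_lt_of_le hTpos hx.1
  have h7 : (∫ t in T..b, (1:ℝ)) = b - T := by simp
  have h8 : (∫ t in T..b, deriv Φ t) = Φ b - Φ T := ftc1 hdiff hode hTpos hTb
  have h9 := abs_le.mp (hM T (le_of_lt hTpos))
  have h10 := abs_le.mp (hM b (le_of_lt (lt_of_lt_of_le hTpos hTb)))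
  rw [h7, h8] at h6
  simp only [hb] at h6
  linarith [h6, h9.1, h10.2]

/-- `Φ` is positive everywhere on `[0,∞)`. -/
lemma pos_everywhere (hAc : ContinuousOn A (Ioi 0)) (hApos : ∀ t > (0:ℝ), 0 < A t)
    (hAtop : (∫⁻ t in Set.Ici (1:ℝ), ENNReal.ofReal (A t)) = ⊤)
    (hcont : ContinuousOn Φ (Ici 0)) (hΦ0 : Φ 0 = 1)
    (hdiff : ∀ t > (0:ℝ), DifferentiableAt ℝ Φ t)
    (hode : ∀ t > (0:ℝ), HasDerivAt (deriv Φ) (A t * Φ t) t)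
    {M : ℝ} (hM : ∀ t ≥ (0:ℝ), |Φ t| ≤ M) :
    ∀ t ≥ (0:ℝ), 0 < Φ t := by
  intro t₁ ht₁
  by_contra hneg
  push_neg at hneg
  have ht₁0 : 0 < t₁ := by
    rcases lt_or_eq_of_le ht₁ with h | h
    · exact h
    · exfalso; rw [← h, hΦ0] at hneg; linarith
  set E := Icc 0 t₁ ∩ Φ ⁻¹' (Iic 0) with hEdef
  have hEclosed : IsClosed E :=
    ContinuousOn.preimage_isClosed_of_isClosed
      (hcont.mono (fun x hx => hx.1)) isClosed_Icc isClosed_Iic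
  have hEne : E.Nonempty := ⟨t₁, ⟨⟨le_of_lt ht₁0, le_rfl⟩, hneg⟩⟩
  have hEbdd : BddBelow E := ⟨0, fun x hx => hx.1.1⟩
  have hsE : sInf E ∈ E := hEclosed.csInf_mem hEne hEbdd
  set s := sInf E
  have hsΦ : Φ s ≤ 0 := hsE.2
  have hs0 : 0 < s := by
    rcases lt_or_eq_of_le hsE.1.1 with h | h
    · exact h
    · exfalso; rw [← h, hΦ0] at hsΦ; linarith
  have hpos' : ∀ t ∈ Ico 0 s, 0 < Φ t := by
    intro t ht
    by_contra hle
    push_neg at hle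
    have htE : t ∈ E := ⟨⟨ht.1, le_trans (le_of_lt ht.2) hsE.1.2⟩, hle⟩
    exact absurd (csInf_le hEbdd htE) (not_le.mpr ht.2)
  -- Φ s = 0
  have hs_mem_closure : s ∈ closure (Ico 0 s) := by
    rw [closure_Ico (ne_of_lt hs0)]
    exact ⟨le_of_lt hs0, le_rfl⟩
  haveI : (𝓝[Ico 0 s] s).NeBot := mem_closure_iff_nhdsWithin_neBot.mp hs_mem_closure
  have htend : Tendsto Φ (𝓝[Ico 0 s] s) (𝓝 (Φ s)) :=
    ((hcont s (le_of_lt hs0)).mono (fun x hx => hx.1)).tendsto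
  have hΦs_nonneg : 0 ≤ Φ s :=
    ge_of_tendsto htend (eventually_nhdsWithin_of_forall (fun x hx => le_of_lt (hpos' x hx)))
  have hΦs : Φ s = 0 := le_antisymm hsΦ hΦs_nonneg
  -- deriv Φ s ≤ 0
  have hds_le : deriv Φ s ≤ 0 := by
    by_contra hd
    push_neg at hd
    have hslope : Tendsto (slope Φ s) (𝓝[≠] s) (𝓝 (deriv Φ s)) :=
      hasDerivAt_iff_tendsto_slope.mp (hdiff s hs0).hasDerivAt
    have hslope' : Tendsto (slope Φ s) (𝓝[<] s) (𝓝 (deriv Φ s)) :=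
      hslope.mono_left (nhdsWithin_mono _ (fun x hx => ne_of_lt hx))
    have hev : ∀ᶠ x in 𝓝[<] s, 0 < slope Φ s x :=
      (tendsto_order.1 hslope').1 0 hd
    have hev2 : ∀ᶠ x in 𝓝[<] s, 0 < x := by
      apply eventually_nhdsWithin_of_eventually_nhds
      exact eventually_gt_nhds hs0
    have hev3 : ∀ᶠ x in 𝓝[<] s, x < s := eventually_mem_nhdsWithin
    obtain ⟨x, hx1, hx2, hx3⟩ := (hev.and (hev2.and hev3)).exists
    have heq : slope Φ s x = Φ x / (x - s) := by
      simp [slope, hΦs, vsub_eq_sub, div_eq_inv_mul]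
    rw [heq] at hx1
    rcases div_pos_iff.mp hx1 with ⟨h1, h2⟩ | ⟨h1, h2⟩
    · linarith
    · linarith [hpos' x ⟨le_of_lt hx2, hx3⟩]
  rcases lt_or_eq_of_le hds_le with hds | hds
  · -- deriv Φ s < 0 : Φ goes negative, blow-down via lemB on -Φ
    have hslope : Tendsto (slope Φ s) (𝓝[>] s) (𝓝 (deriv Φ s)) :=
      (hasDerivAt_iff_tendsto_slope.mp (hdiff s hs0).hasDerivAt).mono_left
        (nhdsWithin_mono _ (fun x hx => ne_of_gt hx))
    have hev : ∀ᶠ x in 𝓝[>] s, slope Φ s x < 0 := (tendsto_order.1 hslope).2 0 hds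
    have hcd : Tendsto (deriv Φ) (𝓝 s) (𝓝 (deriv Φ s)) :=
      ((hode s hs0).differentiableAt.continuousAt).tendsto
    have hev2 : ∀ᶠ x in 𝓝[>] s, deriv Φ x < 0 :=
      eventually_nhdsWithin_of_eventually_nhds ((tendsto_order.1 hcd).2 0 hds)
    have hev3 : ∀ᶠ x in 𝓝[>] s, s < x := eventually_mem_nhdsWithin
    obtain ⟨x, hx1, hx2, hx3⟩ := (hev.and (hev2.and hev3)).exists
    have hxpos : 0 < x := lt_trans hs0 hx3
    have hΦx : Φ x < 0 := by
      have heq : slope Φ s x = Φ x / (x - s) := by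
        simp [slope, hΦs, vsub_eq_sub, div_eq_inv_mul]
      rw [heq] at hx1
      rcases div_neg_iff.mp hx1 with ⟨h1, h2⟩ | ⟨h1, h2⟩
      · linarith
      · exact h1
    -- apply lemB' to -Φ
    have dneg : deriv (fun y => -Φ y) = fun y => -deriv Φ y := funext (fun y => deriv.neg)
    apply lemB (Φ := fun y => -Φ y) hAc hApos hAtop
      (fun t ht => (hdiff t ht).neg)
      (fun t ht => by
        rw [dneg]
        exact (hode t ht).neg.congr_deriv (by simp only [mul_neg]))
      (M := M) (fun t ht => by simpa using hM t ht)
      hxpos (by simpa using hΦx) (by rw [dneg]; simp; linarith [hx2])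
  · -- deriv Φ s = 0 : energy argument kills it
    set a := s / 2 with hadef
    have ha0 : 0 < a := by positivity
    have has : a < s := by simp only [hadef]; linarith
    have hIccsub : Icc a s ⊆ Ioi 0 := fun x hx => lt_of_lt_of_le ha0 hx.1
    obtain ⟨K, hK⟩ := IsCompact.exists_bound_of_continuousOn isCompact_Icc (hAc.mono hIccsub)
    set h : ℝ → ℝ := fun t => (Φ t ^ 2 + deriv Φ t ^ 2) * Real.exp ((1 + K) * t) with hhdef
    have hcont_h : ContinuousOn h (Icc a s) := by
      apply ContinuousOn.mul
      · have hdc : ContinuousOn (deriv Φ) (Ioi 0) := fun t ht =>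
          ((hode t ht).differentiableAt.continuousAt).continuousWithinAt
        exact (((hcont.mono (fun x hx => Set.mem_Ici.mpr (le_of_lt (Set.mem_Ioi.mp (hIccsub hx))))).pow 2).add
          ((hdc.mono hIccsub).pow 2))
      · exact (Real.continuous_exp.comp (continuous_const.mul continuous_id)).continuousOn
    have hderiv_h : ∀ t ∈ Ioo a s, HasDerivAt h
        ((2 * Φ t ^ 1 * deriv Φ t + 2 * deriv Φ t ^ 1 * (A t * Φ t)) * Real.exp ((1 + K) * t)
          + (Φ t ^ 2 + deriv Φ t ^ 2) * (Real.exp ((1 + K) * t) * (1 + K))) t := by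
      intro t ht
      have ht0 : 0 < t := lt_trans ha0 ht.1
      have h1 : HasDerivAt (fun y => Φ y ^ 2 + deriv Φ y ^ 2)
          (2 * Φ t ^ 1 * deriv Φ t + 2 * deriv Φ t ^ 1 * (A t * Φ t)) t :=
        (((hdiff t ht0).hasDerivAt).pow 2).add ((hode t ht0).pow 2)
      have h2 : HasDerivAt (fun y => Real.exp ((1 + K) * y))
          (Real.exp ((1 + K) * t) * (1 + K)) t := by
        have : HasDerivAt (fun y => (1 + K) * y) (1 + K) t := by
          simpa using (hasDerivAt_id t).const_mul (1 + K)
        exact this.exp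
      exact h1.mul h2
    have hmono_h : MonotoneOn h (Icc a s) := by
      apply monotoneOn_of_deriv_nonneg (convex_Icc a s) hcont_h
      · rw [interior_Icc]
        intro t ht
        exact (hderiv_h t ht).differentiableAt.differentiableWithinAt
      · rw [interior_Icc]
        intro t ht
        rw [(hderiv_h t ht).deriv]
        have ht0 : 0 < t := lt_trans ha0 ht.1
        have hA1 := hApos t ht0
        have hA2 : A t ≤ K := le_trans (le_abs_self _)
          (hK t ⟨le_of_lt ht.1, le_of_lt ht.2⟩)
        have hexp := Real.exp_pos ((1 + K) * t)
        set P := Φ t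
        set Q := deriv Φ t
        have key : 0 ≤ 2 * P * Q * (1 + A t) + (P ^ 2 + Q ^ 2) * (1 + K) := by
          nlinarith [sq_nonneg (P + Q), sq_nonneg (P - Q), sq_nonneg P, sq_nonneg Q,
            mul_nonneg (le_of_lt hA1) (sq_nonneg (P + Q)),
            mul_nonneg (sub_nonneg.mpr hA2) (add_nonneg (sq_nonneg P) (sq_nonneg Q))]
        have : (2 * P ^ 1 * Q + 2 * Q ^ 1 * (A t * P)) * Real.exp ((1 + K) * t)
            + (P ^ 2 + Q ^ 2) * (Real.exp ((1 + K) * t) * (1 + K))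
            = Real.exp ((1 + K) * t) * (2 * P * Q * (1 + A t) + (P ^ 2 + Q ^ 2) * (1 + K)) := by
          ring
        rw [this]
        exact mul_nonneg (le_of_lt hexp) key
    have hha : 0 < h a := by
      have hΦa : 0 < Φ a := hpos' a ⟨le_of_lt ha0, has⟩
      have := Real.exp_pos ((1 + K) * a)
      have h1 : 0 < Φ a ^ 2 + deriv Φ a ^ 2 := by nlinarith [sq_nonneg (deriv Φ a)]
      simp only [hhdef]
      exact mul_pos h1 this
    have hhs : h s = 0 := by
      simp only [hhdef]
      rw [hΦs, hds]
      simp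
    have := hmono_h ⟨le_rfl, le_of_lt has⟩ ⟨le_of_lt has, le_rfl⟩ (le_of_lt has)
    rw [hhs] at this
    linarith


/-- Main structural lemma about a solution `Φ`. -/
lemma main (hAc : ContinuousOn A (Ioi 0)) (hApos : ∀ t > (0:ℝ), 0 < A t)
    (hA1 : IntegrableOn A (Ioc 0 1))
    (hAtop : (∫⁻ t in Set.Ici (1:ℝ), ENNReal.ofReal (A t)) = ⊤)
    (hcont : ContinuousOn Φ (Ici 0)) {M : ℝ} (hM : ∀ t ≥ (0:ℝ), |Φ t| ≤ M)
    (hΦ0 : Φ 0 = 1)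
    (hdiff : ∀ t > (0:ℝ), DifferentiableAt ℝ Φ t)
    (hode : ∀ t > (0:ℝ), HasDerivAt (deriv Φ) (A t * Φ t) t) :
    ∃ d : ℝ, derivWithin Φ (Set.Ici 0) 0 = d ∧ d ≤ 0 ∧
      Tendsto (deriv Φ) (𝓝[>] 0) (𝓝 d) ∧
      (∀ t ≥ (0:ℝ), 0 < Φ t) ∧
      Tendsto Φ atTop (𝓝 0) ∧
      Tendsto (deriv Φ) atTop (𝓝 0) := by
  have hpos : ∀ t ≥ (0:ℝ), 0 < Φ t :=
    pos_everywhere hAc hApos hAtop hcont hΦ0 hdiff hode hM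
  have hneg : ∀ t > (0:ℝ), deriv Φ t < 0 := by
    intro t ht
    by_contra h
    push_neg at h
    exact lemB hAc hApos hAtop hdiff hode hM ht (hpos t ht.le) h
  have hdc : ContinuousOn (deriv Φ) (Ioi 0) := contDeriv hode
  have dmono : MonotoneOn (deriv Φ) (Ioi 0) := by
    apply monotoneOn_of_deriv_nonneg (convex_Ioi 0) hdc
    · rw [interior_Ioi]
      exact fun x hx => (hode x hx).differentiableAt.differentiableWithinAt
    · rw [interior_Ioi]
      intro x hx
      rw [(hode x hx).deriv]
      exact (mul_pos (hApos x hx) (hpos x hx.le)).le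
  have hM0 : 0 ≤ M := le_trans (abs_nonneg _) (hM 0 le_rfl)
  -- lower bound for deriv Φ near 0
  set B := deriv Φ 1 - M * ∫ t in Ioc (0:ℝ) 1, A t with hBdef
  have hB : ∀ t ∈ Ioc (0:ℝ) 1, B ≤ deriv Φ t := by
    intro t ht
    have hsub : uIcc t 1 ⊆ Ioi 0 := by
      rw [uIcc_of_le ht.2]; exact fun x hx => lt_of_lt_of_le ht.1 hx.1
    have h1 : (∫ u in t..1, A u * Φ u) = deriv Φ 1 - deriv Φ t :=
      ftc2 hAc hdiff hode ht.1 ht.2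
    have int2 : IntervalIntegrable (fun u => A u * Φ u) volume t 1 :=
      ((hAc.mono hsub).mul ((contPhi hdiff).mono hsub)).intervalIntegrable
    have int1 : IntervalIntegrable (fun u => M * A u) volume t 1 :=
      (continuousOn_const.mul (hAc.mono hsub)).intervalIntegrable
    have h2 : (∫ u in t..1, A u * Φ u) ≤ ∫ u in t..1, M * A u := by
      apply intervalIntegral.integral_mono_on ht.2 int2 int1
      intro x hx
      have hAx := hApos x (lt_of_lt_of_le ht.1 hx.1)
      have := le_trans (le_abs_self _) (hM x (le_of_lt (lt_of_lt_of_le ht.1 hx.1)))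
      nlinarith
    have h3 : (∫ u in t..1, M * A u) = M * ∫ u in t..1, A u :=
      intervalIntegral.integral_const_mul _ _
    have h4 : (∫ u in t..1, A u) ≤ ∫ u in Ioc (0:ℝ) 1, A u := by
      rw [intervalIntegral.integral_of_le ht.2]
      apply setIntegral_mono_set hA1
      · exact (ae_restrict_iff' measurableSet_Ioc).mpr
          (Eventually.of_forall (fun x hx => (hApos x hx.1).le))
      · exact HasSubset.Subset.eventuallyLE (Ioc_subset_Ioc_left ht.1.le)
    have h5 : M * (∫ u in t..1, A u) ≤ M * ∫ u in Ioc (0:ℝ) 1, A u :=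
      mul_le_mul_of_nonneg_left h4 hM0
    simp only [hBdef]
    linarith
  have hBdd : BddBelow (deriv Φ '' Ioi 0) := by
    refine ⟨min B (deriv Φ 1), ?_⟩
    rintro x ⟨t, ht, rfl⟩
    rcases le_total t 1 with h | h
    · exact le_trans (min_le_left _ _) (hB t ⟨ht, h⟩)
    · exact le_trans (min_le_right _ _)
        (dmono (by norm_num : (1:ℝ) ∈ Ioi (0:ℝ)) ht h)
  set d := sInf (deriv Φ '' Ioi 0) with hddef
  have htend : Tendsto (deriv Φ) (𝓝[>] 0) (𝓝 d) :=
    dmono.tendsto_nhdsGT hBdd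
  have hd0 : d ≤ 0 :=
    le_of_tendsto htend
      (eventually_nhdsWithin_of_forall fun x hx => (hneg x hx).le)
  have hD : HasDerivWithinAt Φ d (Ici 0) 0 := by
    apply hasDerivWithinAt_Ici_of_tendsto_deriv (s := Ioi 0)
    · exact fun t ht => (hdiff t ht).differentiableWithinAt
    · exact (hcont 0 self_mem_Ici).mono Ioi_subset_Ici_self
    · exact self_mem_nhdsWithin
    · exact htend
  have hDW : derivWithin Φ (Ici 0) 0 = d :=
    hD.derivWithin (uniqueDiffOn_Ici 0 0 self_mem_Ici)
  -- Φ tends to 0 at infinity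
  have Φanti : AntitoneOn Φ (Ici 0) := by
    apply antitoneOn_of_deriv_nonpos (convex_Ici 0) hcont
    · rw [interior_Ici]
      exact fun x hx => (hdiff x hx).differentiableWithinAt
    · rw [interior_Ici]
      exact fun x hx => (hneg x hx).le
  have ΦatTop : Tendsto Φ atTop (𝓝 0) := by
    have claim : ∀ ε > (0:ℝ), ∃ T ≥ (1:ℝ), Φ T < ε := by
      intro ε hε
      by_contra hc
      push_neg at hc
      obtain ⟨b, hb1, hbC⟩ := intA_big hAc hApos hAtop one_pos ((1 - deriv Φ 1) / ε)
      have hsub : uIcc 1 b ⊆ Ioi 0 := by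
        rw [uIcc_of_le hb1]; exact fun x hx => lt_of_lt_of_le one_pos hx.1
      have int2 : IntervalIntegrable (fun u => A u * Φ u) volume 1 b :=
        ((hAc.mono hsub).mul ((contPhi hdiff).mono hsub)).intervalIntegrable
      have int1 : IntervalIntegrable (fun u => ε * A u) volume 1 b :=
        (continuousOn_const.mul (hAc.mono hsub)).intervalIntegrable
      have h2 : (∫ u in (1:ℝ)..b, ε * A u) ≤ ∫ u in (1:ℝ)..b, A u * Φ u := by
        apply intervalIntegral.integral_mono_on hb1 int1 int2
        intro x hx
        have hAx := hApos x (lt_of_lt_of_le one_pos hx.1)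
        have := hc x hx.1
        nlinarith
      rw [intervalIntegral.integral_const_mul] at h2
      have h1 : (∫ u in (1:ℝ)..b, A u * Φ u) = deriv Φ b - deriv Φ 1 :=
        ftc2 hAc hdiff hode one_pos hb1
      have h6 : (1 - deriv Φ 1) ≤ ε * ∫ u in (1:ℝ)..b, A u := by
        rw [div_le_iff₀ hε] at hbC
        nlinarith
      have := hneg b (lt_of_lt_of_le one_pos hb1)
      linarith
    rw [Metric.tendsto_atTop]
    intro ε hε
    obtain ⟨T, hT1, hTε⟩ := claim ε hε
    refine ⟨T, fun n hn => ?_⟩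
    have hn0 : (0:ℝ) ≤ n := le_trans (le_trans zero_le_one hT1) hn
    have h7 : Φ n ≤ Φ T := Φanti (le_trans zero_le_one hT1) hn0 hn
    rw [Real.dist_eq, sub_zero, abs_of_pos (hpos n hn0)]
    linarith
  -- deriv Φ tends to 0 at infinity
  have derivatTop : Tendsto (deriv Φ) atTop (𝓝 0) := by
    have claim2 : ∀ ε > (0:ℝ), ∃ T ≥ (1:ℝ), -ε < deriv Φ T := by
      intro ε hε
      by_contra hc
      push_neg at hc
      set b := 1 + Φ 1 / ε + 1 with hbdef
      have hb1 : (1:ℝ) ≤ b := by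
        have := (hpos 1 zero_le_one).le
        have : 0 ≤ Φ 1 / ε := div_nonneg this hε.le
        simp only [hbdef]; linarith
      have hsub : uIcc 1 b ⊆ Ioi 0 := by
        rw [uIcc_of_le hb1]; exact fun x hx => lt_of_lt_of_le one_pos hx.1
      have int2 : IntervalIntegrable (deriv Φ) volume 1 b :=
        (hdc.mono hsub).intervalIntegrable
      have h2 : (∫ u in (1:ℝ)..b, deriv Φ u) ≤ ∫ u in (1:ℝ)..b, (-ε : ℝ) := by
        apply intervalIntegral.integral_mono_on hb1 int2 intervalIntegrable_const
        intro x hx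
        exact hc x hx.1
      rw [intervalIntegral.integral_const, smul_eq_mul] at h2
      rw [ftc1 hdiff hode one_pos hb1] at h2
      have h8 : Φ b ≤ Φ 1 + (b - 1) * (-ε) := by linarith
      have h9 : (b - 1) * ε = Φ 1 + ε := by
        simp only [hbdef]
        field_simp
        ring
      have := hpos b (le_trans zero_le_one hb1)
      nlinarith
    rw [Metric.tendsto_atTop]
    intro ε hε
    obtain ⟨T, hT1, hTε⟩ := claim2 ε hε
    refine ⟨T, fun n hn => ?_⟩
    have hT0 : (0:ℝ) < T := lt_of_lt_of_le one_pos hT1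
    have hn0 : (0:ℝ) < n := lt_of_lt_of_le hT0 hn
    have h7 : deriv Φ T ≤ deriv Φ n := dmono hT0 hn0 hn
    have h8 := hneg n hn0
    rw [Real.dist_eq, sub_zero, abs_of_neg h8]
    linarith
  exact ⟨d, hDW, hd0, htend, hpos, ΦatTop, derivatTop⟩

end SLaux

theorem derivative_at_zero_monotone_in_coefficient
    (A₁ A₂ Φ₁ Φ₂ : ℝ → ℝ) (hA₁ : SLHyp A₁) (hA₂ : SLHyp A₂)
    (hle : ∀ t > (0:ℝ), A₂ t ≤ A₁ t)
    (h1 : IsSL A₁ Φ₁) (h2 : IsSL A₂ Φ₂) :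
    |derivWithin Φ₂ (Set.Ici 0) 0| ≤ |derivWithin Φ₁ (Set.Ici 0) 0| := by
  obtain ⟨hAc₁, hApos₁, hA1₁, hAtop₁⟩ := hA₁
  obtain ⟨hAc₂, hApos₂, hA1₂, hAtop₂⟩ := hA₂
  obtain ⟨hcont₁, ⟨M₁, hM₁⟩, hΦ0₁, hdiff₁, hode₁⟩ := h1
  obtain ⟨hcont₂, ⟨M₂, hM₂⟩, hΦ0₂, hdiff₂, hode₂⟩ := h2
  obtain ⟨d₁, hDW₁, hd₁, htend₁, hpos₁, hT₁, hdT₁⟩ :=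
    SLaux.main hAc₁ hApos₁ hA1₁ hAtop₁ hcont₁ hM₁ hΦ0₁ hdiff₁ hode₁
  obtain ⟨d₂, hDW₂, hd₂, htend₂, hpos₂, hT₂, hdT₂⟩ :=
    SLaux.main hAc₂ hApos₂ hA1₂ hAtop₂ hcont₂ hM₂ hΦ0₂ hdiff₂ hode₂
  set W : ℝ → ℝ := fun t => deriv Φ₁ t * Φ₂ t - Φ₁ t * deriv Φ₂ t with hWdef
  have hW' : ∀ t ∈ Set.Ioi (0:ℝ), HasDerivAt W ((A₁ t - A₂ t) * (Φ₁ t * Φ₂ t)) t := by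
    intro t ht
    have hd1 := (hode₁ t ht).mul (hdiff₂ t ht).hasDerivAt
    have hd2 := (hdiff₁ t ht).hasDerivAt.mul (hode₂ t ht)
    have := hd1.sub hd2
    exact this.congr_deriv (by ring)
  have Wmono : MonotoneOn W (Set.Ioi 0) := by
    apply monotoneOn_of_deriv_nonneg (convex_Ioi 0)
    · exact fun t ht => (hW' t ht).differentiableAt.continuousAt.continuousWithinAt
    · rw [interior_Ioi]
      exact fun t ht => (hW' t ht).differentiableAt.differentiableWithinAt
    · rw [interior_Ioi]
      intro t ht
      rw [(hW' t ht).deriv]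
      exact mul_nonneg (sub_nonneg.mpr (hle t ht))
        (mul_pos (hpos₁ t (le_of_lt ht)) (hpos₂ t (le_of_lt ht))).le
  have Wtop : Tendsto W atTop (𝓝 0) := by
    have := (hdT₁.mul hT₂).sub (hT₁.mul hdT₂)
    simpa using this
  have hWle : ∀ t > (0:ℝ), W t ≤ 0 := by
    intro t ht
    apply ge_of_tendsto Wtop
    filter_upwards [eventually_ge_atTop t] with u hu
    exact Wmono ht (lt_of_lt_of_le ht hu) hu
  have hc₁ : Tendsto Φ₁ (𝓝[>] 0) (𝓝 1) := by
    have := (hcont₁ 0 Set.self_mem_Ici).mono Set.Ioi_subset_Ici_self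
    simpa [ContinuousWithinAt, hΦ0₁] using this
  have hc₂ : Tendsto Φ₂ (𝓝[>] 0) (𝓝 1) := by
    have := (hcont₂ 0 Set.self_mem_Ici).mono Set.Ioi_subset_Ici_self
    simpa [ContinuousWithinAt, hΦ0₂] using this
  have W0 : Tendsto W (𝓝[>] 0) (𝓝 (d₁ * 1 - 1 * d₂)) :=
    (htend₁.mul hc₂).sub (hc₁.mul htend₂)
  have hkey : d₁ * 1 - 1 * d₂ ≤ 0 :=
    le_of_tendsto W0 (eventually_nhdsWithin_of_forall fun x hx => hWle x hx)
  rw [hDW₁, hDW₂, abs_of_nonpos hd₂, abs_of_nonpos hd₁]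
  linarith
end

section
/- Let A₁, A₂ : (0,∞) → (0,∞) be continuous, integrable in a neighborhood of zero but not integrable in a neighborhood of infinity, with A₁(t) ≥ A₂(t) for all t > 0. Then for every t ≥ 0 one has |Φ_{A₁}'(t)| · Φ_{A₂}(t) ≥ |Φ_{A₂}'(t)| · Φ_{A₁}(t). -/
open MeasureTheory Filter Set

lemma mvt_aux {f g : ℝ → ℝ} {a b : ℝ} (ha : 0 < a) (hab : a < b)
    (hfg : ∀ t > (0:ℝ), HasDerivAt f (g t) t) :
    ∃ c ∈ Set.Ioo a b, g c = (f b - f a) / (b - a) :=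
  exists_hasDerivAt_eq_slope f g hab
    (fun x hx =>
      ((hfg x (lt_of_lt_of_le ha hx.1)).differentiableAt.continuousAt).continuousWithinAt)
    (fun x hx => hfg x (ha.trans hx.1))

lemma deriv_nonpos_of_bounded {f g : ℝ → ℝ} {M : ℝ}
    (hfg : ∀ t > (0:ℝ), HasDerivAt f (g t) t)
    (hg : MonotoneOn g (Set.Ioi 0))
    (hM : ∀ t ≥ (0:ℝ), f t ≤ M) :
    ∀ t > (0:ℝ), g t ≤ 0 := by
  intro a ha
  by_contra hpos
  push_neg at hpos
  have hMfa : f a ≤ M := hM a ha.le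
  set b := a + (M - f a + 1) / g a with hb
  have hba : a < b := by
    have : 0 < (M - f a + 1) / g a := div_pos (by linarith) hpos
    simp only [hb]; linarith
  obtain ⟨c, hc, hslope⟩ := mvt_aux ha hba hfg
  have hgc : g a ≤ g c := hg (mem_Ioi.mpr ha) (mem_Ioi.mpr (ha.trans hc.1)) hc.1.le
  have hfb : f b ≤ M := hM b (ha.trans hba).le
  have hba' : 0 < b - a := by linarith
  have h2 : g a * (b - a) ≤ f b - f a := by
    have hc2 : g c * (b - a) = f b - f a := by
      rw [hslope]; field_simp
    nlinarith
  have h3 : g a * (b - a) = M - f a + 1 := by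
    have : b - a = (M - f a + 1) / g a := by rw [hb]; ring
    rw [this]; field_simp
  linarith

lemma SL_pos {A Φ : ℝ → ℝ} (hA : SLHyp A) (h : IsSL A Φ) : ∀ t ≥ (0:ℝ), 0 < Φ t := by
  obtain ⟨hAc, hApos, hAint, -⟩ := hA
  obtain ⟨hcont, ⟨M, hM⟩, h0, hdiff, hode⟩ := h
  have hΦd : ∀ t > (0:ℝ), HasDerivAt Φ (deriv Φ t) t := fun t ht => (hdiff t ht).hasDerivAt
  by_contra hc
  push_neg at hc
  obtain ⟨t₀, ht₀, hΦt₀⟩ := hc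
  have ht₀' : (0:ℝ) < t₀ := by
    rcases ht₀.lt_or_eq with h' | h'
    · exact h'
    · rw [← h', h0] at hΦt₀; linarith
  have hmem0 : (0:ℝ) ∈ Icc (Φ t₀) (Φ 0) := ⟨hΦt₀, by rw [h0]; norm_num⟩
  obtain ⟨T, hTmem, hTzero⟩ :=
    intermediate_value_Icc' ht₀ (hcont.mono (Icc_subset_Ici_self)) hmem0
  have hT : 0 < T := by
    rcases hTmem.1.lt_or_eq with h' | h'
    · exact h'
    · rw [← h', h0] at hTzero; linarith
  set u : ℝ → ℝ := fun t => Φ t * Φ t with hu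
  set g : ℝ → ℝ := fun t => deriv Φ t * Φ t + Φ t * deriv Φ t with hg
  have hud : ∀ t > (0:ℝ), HasDerivAt u (g t) t := fun t ht => (hΦd t ht).mul (hΦd t ht)
  have hgd : ∀ t > (0:ℝ), HasDerivAt g
      ((A t * Φ t) * Φ t + deriv Φ t * deriv Φ t
        + (deriv Φ t * deriv Φ t + Φ t * (A t * Φ t))) t :=
    fun t ht => ((hode t ht).mul (hΦd t ht)).add ((hΦd t ht).mul (hode t ht))
  have hgmono : MonotoneOn g (Ioi 0) := by
    apply monotoneOn_of_deriv_nonneg (convex_Ioi 0)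
    · exact fun t ht => ((hgd t ht).differentiableAt.continuousAt).continuousWithinAt
    · rw [interior_Ioi]
      exact fun t ht => (hgd t ht).differentiableAt.differentiableWithinAt
    · rw [interior_Ioi]
      intro t ht
      rw [(hgd t ht).deriv]
      nlinarith [sq_nonneg (deriv Φ t), sq_nonneg (Φ t), (hApos t ht).le]
  have huM : ∀ t ≥ (0:ℝ), u t ≤ M * M := by
    intro t ht
    have h1 := hM t ht
    have h2 : (0:ℝ) ≤ M := le_trans (abs_nonneg _) h1
    calc u t = |Φ t| * |Φ t| := (abs_mul_abs_self _).symm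
    _ ≤ M * M := mul_le_mul h1 h1 (abs_nonneg _) h2
  have hgnonpos : ∀ t > (0:ℝ), g t ≤ 0 := deriv_nonpos_of_bounded hud hgmono huM
  have huanti : AntitoneOn u (Ici 0) := by
    apply antitoneOn_of_deriv_nonpos (convex_Ici 0)
    · exact hcont.mul hcont
    · rw [interior_Ici]
      exact fun t ht => (hud t ht).differentiableAt.differentiableWithinAt
    · rw [interior_Ici]
      intro t ht
      rw [(hud t ht).deriv]
      exact hgnonpos t ht
  have hzero : ∀ s ≥ T, Φ s = 0 := by
    intro s hs
    have h1 : u s ≤ u T := huanti (mem_Ici.mpr hT.le) (mem_Ici.mpr (hT.le.trans hs)) hs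
    have h2 : u T = 0 := by simp only [hu, hTzero, mul_zero]
    have h3 : (0:ℝ) ≤ u s := mul_self_nonneg (Φ s)
    have h4 : u s = 0 := le_antisymm (h2 ▸ h1) h3
    exact mul_self_eq_zero.mp h4
  set T' : ℝ := T + 1 with hT'def
  have hTT' : T < T' := by rw [hT'def]; linarith
  have hT'pos : 0 < T' := by linarith
  have hΦT' : Φ T' = 0 := hzero T' hTT'.le
  have hderivT' : deriv Φ T' = 0 := by
    have hev : Φ =ᶠ[nhds T'] fun _ => (0:ℝ) := by
      filter_upwards [Ioi_mem_nhds hTT'] with x hx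
      exact hzero x (le_of_lt hx)
    rw [hev.deriv_eq]
    exact deriv_const _ _
  have hzero' : ∀ ε, 0 < ε → ε < T' → Φ ε = 0 := by
    intro ε hε hεT'
    obtain ⟨C, hC⟩ := (isCompact_Icc (a := ε) (b := T')).exists_bound_of_continuousOn
      (hAc.mono (fun x hx => lt_of_lt_of_le hε hx.1))
    set K := max 1 C with hKdef
    have hK0 : (0:ℝ) ≤ K := le_trans zero_le_one (le_max_left _ _)
    have hb : 0 < T' - ε := by linarith
    set F : ℝ → ℝ × ℝ := fun s => (Φ (T' - s), deriv Φ (T' - s)) with hF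
    set F' : ℝ → ℝ × ℝ := fun s => (-(deriv Φ (T' - s)), -(A (T' - s) * Φ (T' - s))) with hF'
    have hinner : ∀ s : ℝ, HasDerivAt (fun s : ℝ => T' - s) (0 - 1) s :=
      fun s => (hasDerivAt_const s T').sub (hasDerivAt_id s)
    have hFd : ∀ s ∈ Ico (0:ℝ) (T' - ε), HasDerivWithinAt F (F' s) (Ici s) s := by
      intro s hs
      have hts : 0 < T' - s := by linarith [hs.2]
      have h1 : HasDerivAt (fun s => Φ (T' - s)) (-(deriv Φ (T' - s))) s := by
        have := (hΦd _ hts).comp s (hinner s)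
        exact this.congr_deriv (by ring)
      have h2 : HasDerivAt (fun s => deriv Φ (T' - s)) (-(A (T' - s) * Φ (T' - s))) s := by
        have := (hode _ hts).comp s (hinner s)
        exact this.congr_deriv (by ring)
      exact (h1.prodMk h2).hasDerivWithinAt
    have hFc : ContinuousOn F (Icc 0 (T' - ε)) := by
      intro s hs
      have hts : 0 < T' - s := by linarith [hs.2]
      have cinner : ContinuousAt (fun s : ℝ => T' - s) s :=
        (continuous_const.sub continuous_id).continuousAt
      have c1 : ContinuousAt (fun s => Φ (T' - s)) s :=
        ((hdiff _ hts).continuousAt).comp cinner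
      have c2 : ContinuousAt (fun s => deriv Φ (T' - s)) s :=
        ((hode _ hts).differentiableAt.continuousAt).comp cinner
      exact (c1.prodMk c2).continuousWithinAt
    have hF0 : ‖F 0‖ ≤ 0 := by
      simp [hF, hΦT', hderivT', Prod.norm_def]
    have hbound : ∀ s ∈ Ico (0:ℝ) (T' - ε), ‖F' s‖ ≤ K * ‖F s‖ + 0 := by
      intro s hs
      have htmem : T' - s ∈ Icc ε T' := ⟨by linarith [hs.2], by linarith [hs.1]⟩
      have hCb : |A (T' - s)| ≤ K := by
        have := hC (T' - s) htmem
        rw [Real.norm_eq_abs] at this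
        exact this.trans (le_max_right _ _)
      rw [add_zero]
      simp only [hF, hF', Prod.norm_def, Real.norm_eq_abs, abs_neg]
      apply max_le
      · calc |deriv Φ (T' - s)| ≤ K * |deriv Φ (T' - s)| :=
              le_mul_of_one_le_left (abs_nonneg _) (le_max_left _ _)
        _ ≤ K * max |Φ (T' - s)| |deriv Φ (T' - s)| :=
              mul_le_mul_of_nonneg_left (le_max_right _ _) hK0
      · calc |A (T' - s) * Φ (T' - s)| = |A (T' - s)| * |Φ (T' - s)| := abs_mul _ _
        _ ≤ K * |Φ (T' - s)| := mul_le_mul_of_nonneg_right hCb (abs_nonneg _)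
        _ ≤ K * max |Φ (T' - s)| |deriv Φ (T' - s)| :=
              mul_le_mul_of_nonneg_left (le_max_left _ _) hK0
    have hgron := norm_le_gronwallBound_of_norm_deriv_right_le hFc hFd hF0 hbound
    have hFb : ‖F (T' - ε)‖ ≤ 0 := by
      have h := hgron (T' - ε) ⟨hb.le, le_rfl⟩
      rwa [sub_zero, gronwallBound_ε0_δ0] at h
    have hFb0 : F (T' - ε) = 0 := norm_le_zero_iff.mp hFb
    have : Φ (T' - (T' - ε)) = 0 := congrArg Prod.fst hFb0
    simpa using this
  have h1 : Tendsto Φ (nhdsWithin 0 (Ioi 0)) (nhds 1) := by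
    have := (hcont 0 self_mem_Ici).mono (Ioi_subset_Ici le_rfl)
    rw [ContinuousWithinAt, h0] at this
    exact this
  have h2 : Tendsto Φ (nhdsWithin 0 (Ioi 0)) (nhds 0) := by
    have hev : Φ =ᶠ[nhdsWithin (0:ℝ) (Ioi 0)] (fun _ => (0:ℝ)) := by
      filter_upwards [Ioo_mem_nhdsGT_of_mem (⟨le_rfl, hT'pos⟩ : (0:ℝ) ∈ Ico (0:ℝ) T')] with x hx
      exact hzero' x hx.1 hx.2
    exact Tendsto.congr' hev.symm tendsto_const_nhds
  exact one_ne_zero (tendsto_nhds_unique h1 h2)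

lemma SL_deriv_mono {A Φ : ℝ → ℝ} (hA : SLHyp A) (h : IsSL A Φ) :
    MonotoneOn (deriv Φ) (Ioi 0) := by
  have hpos := SL_pos hA h
  obtain ⟨hcont, ⟨M, hM⟩, h0, hdiff, hode⟩ := h
  apply monotoneOn_of_deriv_nonneg (convex_Ioi 0)
  · exact fun t ht => ((hode t ht).differentiableAt.continuousAt).continuousWithinAt
  · rw [interior_Ioi]
    exact fun t ht => (hode t ht).differentiableAt.differentiableWithinAt
  · rw [interior_Ioi]
    intro t ht
    rw [(hode t ht).deriv]
    exact mul_nonneg (hA.2.1 t ht).le (hpos t (le_of_lt ht)).le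

lemma SL_deriv_nonpos {A Φ : ℝ → ℝ} (hA : SLHyp A) (h : IsSL A Φ) :
    ∀ t > (0:ℝ), deriv Φ t ≤ 0 := by
  have hmono := SL_deriv_mono hA h
  obtain ⟨hcont, ⟨M, hM⟩, h0, hdiff, hode⟩ := h
  exact deriv_nonpos_of_bounded (fun t ht => (hdiff t ht).hasDerivAt) hmono
    (fun t ht => (le_abs_self _).trans (hM t ht))

lemma SL_deriv_tendsto_atTop {A Φ : ℝ → ℝ} (hA : SLHyp A) (h : IsSL A Φ) :
    Tendsto (deriv Φ) atTop (nhds 0) := by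
  have hpos := SL_pos hA h
  have hmono := SL_deriv_mono hA h
  have hnonpos := SL_deriv_nonpos hA h
  obtain ⟨hcont, ⟨M, hM⟩, h0, hdiff, hode⟩ := h
  have hΦd : ∀ t > (0:ℝ), HasDerivAt Φ (deriv Φ t) t := fun t ht => (hdiff t ht).hasDerivAt
  set ψ : ℝ → ℝ := fun t => deriv Φ (max t 1) with hψ
  have hψmono : Monotone ψ := by
    intro s t hst
    exact hmono (mem_Ioi.mpr (lt_of_lt_of_le zero_lt_one (le_max_right s 1)))
      (mem_Ioi.mpr (lt_of_lt_of_le zero_lt_one (le_max_right t 1)))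
      (max_le_max hst le_rfl)
  have hψbdd : BddAbove (Set.range ψ) := by
    refine ⟨0, ?_⟩
    rintro x ⟨t, rfl⟩
    exact hnonpos _ (lt_of_lt_of_le zero_lt_one (le_max_right t 1))
  have hψt : Tendsto ψ atTop (nhds (⨆ t, ψ t)) := tendsto_atTop_ciSup hψmono hψbdd
  set c := ⨆ t, ψ t with hc
  have hcle : ∀ t : ℝ, ψ t ≤ c := fun t => le_ciSup hψbdd t
  have hc0 : c = 0 := by
    rcases lt_trichotomy c 0 with hlt | heq | hgt
    · exfalso
      set t₂ := 1 + (Φ 1 + 1) / (-c) with ht₂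
      have hΦ1 : 0 < Φ 1 := hpos 1 zero_le_one
      have ht₂1 : (1:ℝ) < t₂ := by
        have : 0 < (Φ 1 + 1) / (-c) := div_pos (by linarith) (by linarith)
        simp only [ht₂]; linarith
      obtain ⟨x, hx, hxslope⟩ := mvt_aux zero_lt_one ht₂1 hΦd
      have hxc : deriv Φ x ≤ c := by
        have hh := hcle x
        simpa only [hψ, max_eq_left hx.1.le] using hh
      have ht₂1' : 0 < t₂ - 1 := by linarith
      have hslope2 : Φ t₂ - Φ 1 ≤ c * (t₂ - 1) := by
        have hle2 : (Φ t₂ - Φ 1) / (t₂ - 1) ≤ c := by rw [← hxslope]; exact hxc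
        calc Φ t₂ - Φ 1 = (Φ t₂ - Φ 1) / (t₂ - 1) * (t₂ - 1) := by field_simp
        _ ≤ c * (t₂ - 1) := mul_le_mul_of_nonneg_right hle2 ht₂1'.le
      have hct : c * (t₂ - 1) = -(Φ 1 + 1) := by
        have h1 : t₂ - 1 = (Φ 1 + 1) / (-c) := by rw [ht₂]; ring
        rw [h1]
        field_simp
        rw [div_self (ne_of_lt hlt)]
      have hΦt₂ : Φ t₂ ≤ -1 := by linarith
      linarith [hpos t₂ (by linarith : (0:ℝ) ≤ t₂)]
    · exact heq
    · exfalso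
      have : c ≤ 0 :=
        ciSup_le (fun t => hnonpos _ (lt_of_lt_of_le zero_lt_one (le_max_right t 1)))
      linarith
  rw [hc0] at hψt
  apply hψt.congr'
  filter_upwards [Filter.eventually_ge_atTop (1:ℝ)] with t ht
  simp only [hψ, max_eq_left ht]

lemma SL_deriv_limit_zero {A Φ : ℝ → ℝ} (hA : SLHyp A) (h : IsSL A Φ) :
    ∃ ℓ : ℝ, ℓ ≤ 0 ∧ Tendsto (deriv Φ) (nhdsWithin 0 (Ioi 0)) (nhds ℓ) ∧
      derivWithin Φ (Set.Ici 0) 0 = ℓ := by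
  have hnonpos := SL_deriv_nonpos hA h
  obtain ⟨hAc, hApos, hAint, -⟩ := hA
  obtain ⟨hcont, ⟨M, hM⟩, h0, hdiff, hode⟩ := h
  set P : ℝ → ℝ := fun x => ∫ t in Ioc 0 x, A t * Φ t with hP
  have hInt : IntegrableOn (fun t => A t * Φ t) (Ioc 0 1) := by
    have hmeas : AEStronglyMeasurable Φ (volume.restrict (Ioc 0 1)) :=
      (hcont.mono (Ioc_subset_Icc_self.trans Icc_subset_Ici_self)).aestronglyMeasurable
        measurableSet_Ioc
    have hbd : ∀ᵐ x ∂(volume.restrict (Ioc (0:ℝ) 1)), ‖Φ x‖ ≤ M :=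
      (ae_restrict_iff' measurableSet_Ioc).mpr
        (ae_of_all _ (fun x hx => by rw [Real.norm_eq_abs]; exact hM x hx.1.le))
    have hmul := Integrable.bdd_mul (c := M) hAint hmeas hbd
    exact hmul.congr (ae_of_all _ (fun x => mul_comm _ _))
  have hIcc : IntegrableOn (fun t => A t * Φ t) (Icc 0 1) := by
    rwa [integrableOn_Icc_iff_integrableOn_Ioc]
  have hPcont : ContinuousOn P (Icc 0 1) := intervalIntegral.continuousOn_primitive hIcc
  have hkey : ∀ s ∈ Ioc (0:ℝ) 1, deriv Φ s = (deriv Φ 1 - P 1) + P s := by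
    intro s hs
    have hs0 := hs.1
    have hsub1 : Icc s 1 ⊆ Ioi 0 := fun t ht => lt_of_lt_of_le hs0 ht.1
    have hsub2 : Icc s 1 ⊆ Ici 0 := fun t ht => (lt_of_lt_of_le hs0 ht.1).le
    have hftc : ∫ t in s..1, A t * Φ t = deriv Φ 1 - deriv Φ s := by
      apply intervalIntegral.integral_eq_sub_of_hasDerivAt
      · intro t ht
        rw [uIcc_of_le hs.2] at ht
        exact hode t (lt_of_lt_of_le hs0 ht.1)
      · apply ContinuousOn.intervalIntegrable
        have : ContinuousOn (fun t => A t * Φ t) (Icc s 1) :=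
          (hAc.mono hsub1).mul (hcont.mono hsub2)
        rwa [uIcc_of_le hs.2]
    have hsplit : P 1 = P s + ∫ t in Ioc s 1, A t * Φ t := by
      simp only [hP]
      rw [← Ioc_union_Ioc_eq_Ioc hs.1.le hs.2,
        setIntegral_union (Ioc_disjoint_Ioc_of_le le_rfl) measurableSet_Ioc
          (hInt.mono_set (Ioc_subset_Ioc_right hs.2))
          (hInt.mono_set (Ioc_subset_Ioc_left hs.1.le))]
    have hIoc : ∫ t in s..1, A t * Φ t = ∫ t in Ioc s 1, A t * Φ t :=
      intervalIntegral.integral_of_le hs.2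
    rw [hIoc] at hftc
    linarith
  have hP0 : P 0 = 0 := by simp [hP]
  have hPt : Tendsto P (nhdsWithin 0 (Ioi 0)) (nhds 0) := by
    have h1 : ContinuousWithinAt P (Icc 0 1) 0 := hPcont 0 (left_mem_Icc.mpr zero_le_one)
    have h2 := h1.mono (Ioc_subset_Icc_self : Ioc (0:ℝ) 1 ⊆ Icc 0 1)
    rw [ContinuousWithinAt, hP0] at h2
    rwa [← nhdsWithin_Ioc_eq_nhdsGT zero_lt_one]
  have hDt : Tendsto (deriv Φ) (nhdsWithin 0 (Ioi 0)) (nhds (deriv Φ 1 - P 1)) := by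
    have hev : (fun s => deriv Φ 1 - P 1 + P s) =ᶠ[nhdsWithin (0:ℝ) (Ioi 0)] deriv Φ := by
      filter_upwards [Ioc_mem_nhdsGT_of_mem (⟨le_rfl, zero_lt_one⟩ : (0:ℝ) ∈ Ico (0:ℝ) 1)]
        with s hs
      exact (hkey s hs).symm
    have ht : Tendsto (fun s => deriv Φ 1 - P 1 + P s) (nhdsWithin 0 (Ioi 0))
        (nhds (deriv Φ 1 - P 1 + 0)) := tendsto_const_nhds.add hPt
    rw [add_zero] at ht
    exact ht.congr' hev
  have hℓle : deriv Φ 1 - P 1 ≤ 0 := by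
    apply le_of_tendsto hDt
    filter_upwards [self_mem_nhdsWithin] with s hs
    exact hnonpos s hs
  have hD : HasDerivWithinAt Φ (deriv Φ 1 - P 1) (Ici 0) 0 := by
    apply hasDerivWithinAt_Ici_of_tendsto_deriv (s := Ioi 0)
    · exact fun t ht => (hdiff t ht).differentiableWithinAt
    · exact (hcont 0 self_mem_Ici).mono (Ioi_subset_Ici le_rfl)
    · exact self_mem_nhdsWithin
    · exact hDt
  exact ⟨deriv Φ 1 - P 1, hℓle, hDt, hD.derivWithin (uniqueDiffOn_Ici 0 0 self_mem_Ici)⟩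

theorem log_derivative_monotone_in_coefficient
    (A₁ A₂ Φ₁ Φ₂ : ℝ → ℝ) (hA₁ : SLHyp A₁) (hA₂ : SLHyp A₂)
    (hle : ∀ t > (0:ℝ), A₂ t ≤ A₁ t)
    (h1 : IsSL A₁ Φ₁) (h2 : IsSL A₂ Φ₂) :
    ∀ t ≥ (0:ℝ),
      |derivWithin Φ₂ (Set.Ici 0) t| * Φ₁ t ≤ |derivWithin Φ₁ (Set.Ici 0) t| * Φ₂ t := by
  have hpos₁ := SL_pos hA₁ h1
  have hpos₂ := SL_pos hA₂ h2
  have hnp₁ := SL_deriv_nonpos hA₁ h1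
  have hnp₂ := SL_deriv_nonpos hA₂ h2
  have htt₁ := SL_deriv_tendsto_atTop hA₁ h1
  have htt₂ := SL_deriv_tendsto_atTop hA₂ h2
  obtain ⟨ℓ₁, hℓ₁le, hℓ₁t, hℓ₁d⟩ := SL_deriv_limit_zero hA₁ h1
  obtain ⟨ℓ₂, hℓ₂le, hℓ₂t, hℓ₂d⟩ := SL_deriv_limit_zero hA₂ h2
  obtain ⟨hc₁, ⟨M₁, hM₁⟩, h01, hdiff₁, hode₁⟩ := h1
  obtain ⟨hc₂, ⟨M₂, hM₂⟩, h02, hdiff₂, hode₂⟩ := h2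
  have hΦd₁ : ∀ t > (0:ℝ), HasDerivAt Φ₁ (deriv Φ₁ t) t := fun t ht => (hdiff₁ t ht).hasDerivAt
  have hΦd₂ : ∀ t > (0:ℝ), HasDerivAt Φ₂ (deriv Φ₂ t) t := fun t ht => (hdiff₂ t ht).hasDerivAt
  have hM₁0 : 0 ≤ M₁ := le_trans (abs_nonneg _) (hM₁ 0 le_rfl)
  have hM₂0 : 0 ≤ M₂ := le_trans (abs_nonneg _) (hM₂ 0 le_rfl)
  set W : ℝ → ℝ := fun t => deriv Φ₁ t * Φ₂ t - deriv Φ₂ t * Φ₁ t with hWdef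
  have hWd : ∀ t > (0:ℝ), HasDerivAt W
      ((A₁ t * Φ₁ t) * Φ₂ t + deriv Φ₁ t * deriv Φ₂ t
        - ((A₂ t * Φ₂ t) * Φ₁ t + deriv Φ₂ t * deriv Φ₁ t)) t :=
    fun t ht => ((hode₁ t ht).mul (hΦd₂ t ht)).sub ((hode₂ t ht).mul (hΦd₁ t ht))
  have hWmono : MonotoneOn W (Ioi 0) := by
    apply monotoneOn_of_deriv_nonneg (convex_Ioi 0)
    · exact fun t ht => ((hWd t ht).differentiableAt.continuousAt).continuousWithinAt
    · rw [interior_Ioi]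
      exact fun t ht => (hWd t ht).differentiableAt.differentiableWithinAt
    · rw [interior_Ioi]
      intro t ht
      rw [(hWd t ht).deriv]
      nlinarith [hpos₁ t (le_of_lt ht), hpos₂ t (le_of_lt ht), hle t ht,
        mul_nonneg (mul_nonneg (sub_nonneg.mpr (hle t ht)) (hpos₁ t (le_of_lt ht)).le)
          (hpos₂ t (le_of_lt ht)).le]
  have hWtop : Tendsto W atTop (nhds 0) := by
    apply squeeze_zero_norm' (a := fun t => |deriv Φ₁ t| * M₂ + |deriv Φ₂ t| * M₁)
    · filter_upwards [eventually_ge_atTop (0:ℝ)] with t ht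
      rw [Real.norm_eq_abs]
      calc |deriv Φ₁ t * Φ₂ t - deriv Φ₂ t * Φ₁ t|
          ≤ |deriv Φ₁ t * Φ₂ t| + |deriv Φ₂ t * Φ₁ t| := abs_sub _ _
      _ = |deriv Φ₁ t| * |Φ₂ t| + |deriv Φ₂ t| * |Φ₁ t| := by rw [abs_mul, abs_mul]
      _ ≤ |deriv Φ₁ t| * M₂ + |deriv Φ₂ t| * M₁ := by
          gcongr
          exacts [hM₂ t ht, hM₁ t ht]
    · have t1 : Tendsto (fun t => |deriv Φ₁ t| * M₂) atTop (nhds 0) := by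
        simpa using (htt₁.abs.mul_const M₂)
      have t2 : Tendsto (fun t => |deriv Φ₂ t| * M₁) atTop (nhds 0) := by
        simpa using (htt₂.abs.mul_const M₁)
      simpa using t1.add t2
  have hWnonpos : ∀ t > (0:ℝ), W t ≤ 0 := by
    intro t ht
    apply ge_of_tendsto hWtop
    filter_upwards [eventually_ge_atTop (max t 1)] with s hs
    exact hWmono (mem_Ioi.mpr ht)
      (mem_Ioi.mpr (lt_of_lt_of_le ht ((le_max_left t 1).trans hs)))
      ((le_max_left t 1).trans hs)
  intro t ht
  rcases ht.lt_or_eq with ht' | ht'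
  · -- t > 0 ... ht' : 0 < t
    rw [derivWithin_of_mem_nhds (Ici_mem_nhds ht'), derivWithin_of_mem_nhds (Ici_mem_nhds ht'),
      abs_of_nonpos (hnp₂ t ht'), abs_of_nonpos (hnp₁ t ht')]
    have hW := hWnonpos t ht'
    simp only [hWdef] at hW
    nlinarith [hW]
  · -- t = 0
    subst ht'
    rw [hℓ₁d, hℓ₂d, h01, h02, mul_one, mul_one, abs_of_nonpos hℓ₂le, abs_of_nonpos hℓ₁le]
    have hΦ₁t : Tendsto Φ₁ (nhdsWithin 0 (Ioi 0)) (nhds 1) := by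
      have := (hc₁ 0 self_mem_Ici).mono (Ioi_subset_Ici le_rfl)
      rwa [ContinuousWithinAt, h01] at this
    have hΦ₂t : Tendsto Φ₂ (nhdsWithin 0 (Ioi 0)) (nhds 1) := by
      have := (hc₂ 0 self_mem_Ici).mono (Ioi_subset_Ici le_rfl)
      rwa [ContinuousWithinAt, h02] at this
    have hWt0 : Tendsto W (nhdsWithin 0 (Ioi 0)) (nhds (ℓ₁ * 1 - ℓ₂ * 1)) :=
      (hℓ₁t.mul hΦ₂t).sub (hℓ₂t.mul hΦ₁t)
    have hgoal : ℓ₁ * 1 - ℓ₂ * 1 ≤ 0 := by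
      apply le_of_tendsto hWt0
      filter_upwards [self_mem_nhdsWithin] with s hs
      exact hWnonpos s hs
    linarith
end

section
/- Let A₁, A₂ : (0,∞) → (0,∞) be continuous, integrable in a neighborhood of zero but not integrable in a neighborhood of infinity, with A₁(t) ≥ A₂(t) for all t > 0. Then for all 0 ≤ s ≤ t one has Φ_{A₁}(t) · Φ_{A₂}(s) ≤ Φ_{A₂}(t) · Φ_{A₁}(s); equivalently, the ratio Φ_{A₁}/Φ_{A₂} is nonincreasing on [0,∞). -/
open MeasureTheory Filter Set Topology

/-- If the derivative of `f` is at most `d` on `[a,b]`, then `f b - f a ≤ d * (b - a)`. -/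
private lemma slope_bound_aux {f : ℝ → ℝ} {a b d : ℝ} (hab : a ≤ b)
    (hdiff : ∀ x ∈ Set.Icc a b, DifferentiableAt ℝ f x)
    (hd : ∀ x ∈ Set.Icc a b, deriv f x ≤ d) :
    f b - f a ≤ d * (b - a) := by
  set g : ℝ → ℝ := fun t => f t - d * t with hg
  have hgd : ∀ x ∈ Set.Icc a b, DifferentiableAt ℝ g x := fun x hx =>
    (hdiff x hx).sub ((differentiable_id.const_mul d) x)
  have hmono : AntitoneOn g (Set.Icc a b) := by
    apply antitoneOn_of_deriv_nonpos (convex_Icc a b)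
    · exact fun x hx => (hgd x hx).continuousAt.continuousWithinAt
    · intro x hx
      rw [interior_Icc] at hx
      exact (hgd x (Set.Ioo_subset_Icc_self hx)).differentiableWithinAt
    · intro x hx
      rw [interior_Icc] at hx
      have hx' := Set.Ioo_subset_Icc_self hx
      have h1 : HasDerivAt g (deriv f x - d) x := by
        have h := ((hdiff x hx').hasDerivAt.sub ((hasDerivAt_id x).const_mul d))
        simp at h
        exact h
      rw [h1.deriv]
      linarith [hd x hx']
  have := hmono (Set.left_mem_Icc.mpr hab) (Set.right_mem_Icc.mpr hab) hab
  simp only [hg] at this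
  nlinarith [this]

/-- A bounded function on `[0,∞)`, differentiable on `(0,∞)`, cannot have derivative
eventually bounded above by a negative constant. -/
private lemma no_neg_deriv_bound {Φ : ℝ → ℝ} {M a d : ℝ}
    (hM : ∀ t ≥ (0:ℝ), |Φ t| ≤ M)
    (hdiff : ∀ t > (0:ℝ), DifferentiableAt ℝ Φ t)
    (ha : 0 < a) (hd : d < 0)
    (hall : ∀ t, a ≤ t → deriv Φ t ≤ d) : False := by
  have hM0 : 0 ≤ M := le_trans (abs_nonneg _) (hM 0 le_rfl)
  set b : ℝ := a + (2 * M + 1) / (-d) with hb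
  have hba : a ≤ b := by
    have h' : 0 < (2 * M + 1) / (-d) := div_pos (by linarith) (by linarith)
    rw [hb]
    linarith
  have hkey := slope_bound_aux hba
    (fun x hx => hdiff x (lt_of_lt_of_le ha hx.1))
    (fun x hx => hall x hx.1)
  have hbsub : b - a = (2 * M + 1) / (-d) := by rw [hb]; ring
  have hprod : d * (b - a) = -(2 * M + 1) := by
    have hdne : d ≠ 0 := ne_of_lt hd
    rw [hbsub, mul_div_assoc', div_neg, mul_div_cancel_left₀ _ hdne]
  rw [hprod] at hkey
  have h1 := hM a ha.le
  have h2 := hM b (le_trans ha.le hba)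
  rw [abs_le] at h1 h2
  linarith [h1.1, h1.2, h2.1, h2.2]

/-- The solution `Φ` is strictly positive on `[0,∞)`. -/
private lemma phi_pos {A Φ : ℝ → ℝ} (hAc : ContinuousOn A (Set.Ioi 0))
    (hApos : ∀ t > (0:ℝ), 0 < A t) (h : IsSL A Φ) :
    ∀ t, 0 ≤ t → 0 < Φ t := by
  obtain ⟨hc, ⟨M, hM⟩, h0, hdiff, hd2⟩ := h
  by_contra hcon
  push_neg at hcon
  obtain ⟨x, hx0, hxle⟩ := hcon
  set S : Set ℝ := {t | 0 ≤ t ∧ Φ t ≤ 0} with hS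
  have hSne : S.Nonempty := ⟨x, hx0, hxle⟩
  have hSbdd : BddBelow S := ⟨0, fun y hy => hy.1⟩
  have hSclosed : IsClosed S := by
    have hSeq : S = Set.Ici 0 ∩ Φ ⁻¹' Set.Iic 0 := by
      ext t
      simp [hS, Set.mem_Ici, Set.mem_Iic, and_comm]
    rw [hSeq]
    exact hc.preimage_isClosed_of_isClosed isClosed_Ici isClosed_Iic
  set t₀ := sInf S with ht₀def
  have ht₀S : t₀ ∈ S := hSclosed.csInf_mem hSne hSbdd
  have ht₀pos : 0 < t₀ := by
    rcases lt_or_eq_of_le ht₀S.1 with hlt | heq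
    · exact hlt
    · exfalso
      have := ht₀S.2
      rw [← heq, h0] at this
      linarith
  have hbefore : ∀ s, 0 ≤ s → s < t₀ → 0 < Φ s := by
    intro s hs0 hst
    by_contra hc2
    push_neg at hc2
    exact absurd (csInf_le hSbdd ⟨hs0, hc2⟩) (not_le.mpr hst)
  have hcontΦ : ∀ t > (0:ℝ), ContinuousAt Φ t := fun t ht => (hdiff t ht).continuousAt
  have hneIoo : (𝓝[Set.Ioo 0 t₀] t₀).NeBot := by
    apply mem_closure_iff_nhdsWithin_neBot.mp
    rw [closure_Ioo (ne_of_lt ht₀pos)]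
    exact Set.right_mem_Icc.mpr ht₀pos.le
  have hΦt₀ : Φ t₀ = 0 := by
    refine le_antisymm ht₀S.2 ?_
    have htend : Tendsto Φ (𝓝[Set.Ioo 0 t₀] t₀) (𝓝 (Φ t₀)) :=
      (hcontΦ t₀ ht₀pos).tendsto.mono_left nhdsWithin_le_nhds
    refine ge_of_tendsto htend ?_
    filter_upwards [self_mem_nhdsWithin] with y hy
    exact (hbefore y hy.1.le hy.2).le
  have hdAt : HasDerivAt Φ (deriv Φ t₀) t₀ := (hdiff t₀ ht₀pos).hasDerivAt
  have hslope := hasDerivAt_iff_tendsto_slope.mp hdAt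
  have hd_le : deriv Φ t₀ ≤ 0 := by
    have hsub : 𝓝[Set.Ioo 0 t₀] t₀ ≤ 𝓝[≠] t₀ :=
      nhdsWithin_mono _ (fun y hy => ne_of_lt hy.2)
    refine le_of_tendsto (hslope.mono_left hsub) ?_
    filter_upwards [self_mem_nhdsWithin] with y hy
    rw [slope_def_field, hΦt₀, sub_zero]
    apply div_nonpos_of_nonneg_of_nonpos (hbefore y hy.1.le hy.2).le
    linarith [hy.2]
  rcases lt_or_eq_of_le hd_le with hdneg | hdzero
  · -- deriv Φ t₀ < 0 : Φ goes to -∞, contradiction with boundedness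
    -- eventual negativity just right of t₀
    have hev : ∀ᶠ y in 𝓝[>] t₀, Φ y < 0 := by
      have hs' : Tendsto (slope Φ t₀) (𝓝[>] t₀) (𝓝 (deriv Φ t₀)) :=
        hslope.mono_left (nhdsWithin_mono _ (fun y hy => ne_of_gt hy))
      have hevs : ∀ᶠ y in 𝓝[>] t₀, slope Φ t₀ y < 0 := hs'.eventually_lt_const hdneg
      filter_upwards [hevs, self_mem_nhdsWithin] with y h1 h2
      have hyt : t₀ < y := h2
      rw [slope_def_field, hΦt₀, sub_zero] at h1
      have h3 := mul_neg_of_neg_of_pos h1 (sub_pos.mpr hyt)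
      rwa [div_mul_cancel₀ _ (sub_pos.mpr hyt).ne'] at h3
    obtain ⟨ε, hε, hevball⟩ : ∃ ε > 0, ∀ y, t₀ < y → y < t₀ + ε → Φ y < 0 := by
      rw [eventually_nhdsWithin_iff] at hev
      obtain ⟨ε, hε, hball⟩ := Metric.eventually_nhds_iff.mp hev
      refine ⟨ε, hε, fun y h1 h2 => hball ?_ h1⟩
      rw [Real.dist_eq, abs_lt]
      constructor <;> linarith
    set S' : Set ℝ := {t | t₀ ≤ t ∧ ∀ s ∈ Set.Icc t₀ t, Φ s ≤ 0} with hS'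
    have ht₀S' : t₀ ∈ S' := by
      refine ⟨le_rfl, fun s hs => ?_⟩
      have hst : s = t₀ := le_antisymm hs.2 hs.1
      rw [hst, hΦt₀]
    have hderiv_le : ∀ t ∈ S', ∀ s ∈ Set.Icc t₀ t, deriv Φ s ≤ deriv Φ t₀ := by
      intro t ht s hs
      have hanti : AntitoneOn (deriv Φ) (Set.Icc t₀ t) := by
        apply antitoneOn_of_deriv_nonpos (convex_Icc _ _)
        · exact fun y hy =>
            ((hd2 y (lt_of_lt_of_le ht₀pos hy.1)).differentiableAt.continuousAt).continuousWithinAt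
        · intro y hy
          rw [interior_Icc] at hy
          exact (hd2 y (lt_of_lt_of_le ht₀pos hy.1.le)).differentiableAt.differentiableWithinAt
        · intro y hy
          rw [interior_Icc] at hy
          have hy0 : 0 < y := lt_trans ht₀pos hy.1
          rw [(hd2 y hy0).deriv]
          exact mul_nonpos_iff.mpr (Or.inl ⟨(hApos y hy0).le, ht.2 y (Set.Ioo_subset_Icc_self hy)⟩)
      exact hanti (Set.left_mem_Icc.mpr ht.1) hs hs.1
    have hval : ∀ t ∈ S', Φ t ≤ deriv Φ t₀ * (t - t₀) := by
      intro t ht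
      have hkey := slope_bound_aux ht.1
        (fun x hx => hdiff x (lt_of_lt_of_le ht₀pos hx.1))
        (hderiv_le t ht)
      rw [hΦt₀, sub_zero] at hkey
      exact hkey
    by_cases hbdd : BddAbove S'
    · -- bounded case: extend past the sup, contradiction
      set c := sSup S' with hcdef
      have hcS'le : ∀ t ∈ S', t ≤ c := fun t ht => le_csSup hbdd ht
      have ht₀c : t₀ ≤ c := hcS'le t₀ ht₀S'
      have hstep : t₀ + ε / 2 ∈ S' := by
        refine ⟨by linarith, fun s hs => ?_⟩
        rcases eq_or_lt_of_le hs.1 with heq | hlt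
        · rw [← heq, hΦt₀]
        · exact (hevball s hlt (by linarith [hs.2])).le
      have htc : t₀ < c := lt_of_lt_of_le (by linarith) (hcS'le _ hstep)
      have hcS' : c ∈ S' := by
        refine ⟨ht₀c, fun s hs => ?_⟩
        rcases lt_or_eq_of_le hs.2 with hlt | heq
        · obtain ⟨u, huS', hsu⟩ := exists_lt_of_lt_csSup ⟨t₀, ht₀S'⟩ hlt
          exact huS'.2 s ⟨hs.1, hsu.le⟩
        · have hccont : ContinuousAt Φ c := hcontΦ c (lt_trans ht₀pos htc)
          have hneIco : (𝓝[Set.Ico t₀ c] c).NeBot := by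
            apply mem_closure_iff_nhdsWithin_neBot.mp
            rw [closure_Ico (ne_of_lt htc)]
            exact Set.right_mem_Icc.mpr htc.le
          have htendc : Tendsto Φ (𝓝[Set.Ico t₀ c] c) (𝓝 (Φ c)) :=
            hccont.tendsto.mono_left nhdsWithin_le_nhds
          rw [heq]
          refine le_of_tendsto htendc ?_
          filter_upwards [self_mem_nhdsWithin] with y hy
          obtain ⟨u, huS', hyu⟩ := exists_lt_of_lt_csSup ⟨t₀, ht₀S'⟩ hy.2
          exact huS'.2 y ⟨hy.1, hyu.le⟩
      have hΦc : Φ c < 0 :=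
        lt_of_le_of_lt (hval c hcS') (mul_neg_of_neg_of_pos hdneg (sub_pos.mpr htc))
      have hccont : ContinuousAt Φ c := hcontΦ c (lt_trans ht₀pos htc)
      have hevc : ∀ᶠ y in 𝓝 c, Φ y < 0 := hccont.tendsto.eventually_lt_const hΦc
      obtain ⟨ε', hε', hball'⟩ := Metric.eventually_nhds_iff.mp hevc
      have hmem2 : c + ε' / 2 ∈ S' := by
        refine ⟨by linarith, fun s hs => ?_⟩
        rcases le_or_gt s c with hsc | hsc
        · exact hcS'.2 s ⟨hs.1, hsc⟩
        · refine (hball' ?_).le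
          rw [Real.dist_eq, abs_lt]
          constructor <;> [linarith; linarith [hs.2]]
      linarith [hcS'le _ hmem2]
    · -- unbounded case: derivative ≤ d < 0 forever
      have hall : ∀ t, t₀ ≤ t → deriv Φ t ≤ deriv Φ t₀ := by
        intro t htt
        obtain ⟨u, hu, htu⟩ : ∃ u ∈ S', t ≤ u := by
          by_contra hcc
          push_neg at hcc
          exact hbdd ⟨t, fun y hy => (hcc y hy).le⟩
        exact hderiv_le u hu t ⟨htt, htu⟩
      exact no_neg_deriv_bound hM hdiff ht₀pos hdneg hall
  · -- deriv Φ t₀ = 0 : use Grönwall (uniqueness) to get Φ ≡ 0 near t₀, contradiction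
    set a := t₀ / 2 with hadef
    have ha0 : 0 < a := by rw [hadef]; positivity
    have hat : a < t₀ := by rw [hadef]; linarith
    obtain ⟨C, hC⟩ := (isCompact_Icc (a := a) (b := t₀)).exists_bound_of_continuousOn
      (hAc.mono (fun y hy => lt_of_lt_of_le ha0 hy.1))
    set K := max C 1 with hKdef
    have hK1 : (1:ℝ) ≤ K := le_max_right _ _
    have hKnn : (0:ℝ) ≤ K := le_trans zero_le_one hK1
    set f : ℝ → ℝ × ℝ := fun s => (Φ (t₀ - s), deriv Φ (t₀ - s)) with hfdef
    set f' : ℝ → ℝ × ℝ :=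
      fun s => (-(deriv Φ (t₀ - s)), -(A (t₀ - s) * Φ (t₀ - s))) with hf'def
    have hmemI : ∀ s ∈ Set.Icc (0:ℝ) a, a ≤ t₀ - s ∧ t₀ - s ≤ t₀ := by
      intro s hs
      constructor
      · have := hs.2; rw [hadef] at *; linarith [hs.2]
      · linarith [hs.1]
    have hfd : ∀ s ∈ Set.Icc (0:ℝ) a, HasDerivAt f (f' s) s := by
      intro s hs
      have hpos : 0 < t₀ - s := lt_of_lt_of_le ha0 (hmemI s hs).1
      have hlin : HasDerivAt (fun x : ℝ => t₀ - x) (-1) s := by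
        simpa using (hasDerivAt_id s).const_sub t₀
      have h1 : HasDerivAt (fun x => Φ (t₀ - x)) (deriv Φ (t₀ - s) * (-1)) s :=
        (hdiff _ hpos).hasDerivAt.comp s hlin
      have h2 : HasDerivAt (fun x => deriv Φ (t₀ - x)) ((A (t₀ - s) * Φ (t₀ - s)) * (-1)) s :=
        (hd2 _ hpos).comp s hlin
      have h3 := h1.prodMk h2
      simp only [hfdef, hf'def]
      convert h3 using 2 <;> ring
    have hfc : ContinuousOn f (Set.Icc 0 a) :=
      fun s hs => ((hfd s hs).continuousAt).continuousWithinAt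
    have hf0 : ‖f 0‖ ≤ 0 := by
      have : f 0 = (0, 0) := by
        simp only [hfdef, sub_zero]
        rw [hΦt₀, hdzero]
      rw [this]
      simp [Prod.norm_def]
    have hbound : ∀ s ∈ Set.Ico (0:ℝ) a, ‖f' s‖ ≤ K * ‖f s‖ + 0 := by
      intro s hs
      have hs' := Set.Ico_subset_Icc_self hs
      have hCA : |A (t₀ - s)| ≤ C := by
        have := hC (t₀ - s) ⟨(hmemI s hs').1, (hmemI s hs').2⟩
        simpa [Real.norm_eq_abs] using this
      have hnorm : ‖f s‖ = max |Φ (t₀ - s)| |deriv Φ (t₀ - s)| := by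
        simp [hfdef, Prod.norm_def, Real.norm_eq_abs]
      have hnorm' : ‖f' s‖ = max |deriv Φ (t₀ - s)| (|A (t₀ - s)| * |Φ (t₀ - s)|) := by
        simp [hf'def, Prod.norm_def, Real.norm_eq_abs, abs_neg, abs_mul]
      rw [hnorm, hnorm', add_zero]
      apply max_le
      · calc |deriv Φ (t₀ - s)| ≤ max |Φ (t₀ - s)| |deriv Φ (t₀ - s)| := le_max_right _ _
          _ ≤ K * max |Φ (t₀ - s)| |deriv Φ (t₀ - s)| :=
            le_mul_of_one_le_left (le_max_of_le_right (abs_nonneg _)) hK1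
      · calc |A (t₀ - s)| * |Φ (t₀ - s)| ≤ K * |Φ (t₀ - s)| :=
              mul_le_mul_of_nonneg_right (le_trans hCA (le_max_left _ _)) (abs_nonneg _)
          _ ≤ K * max |Φ (t₀ - s)| |deriv Φ (t₀ - s)| :=
              mul_le_mul_of_nonneg_left (le_max_left _ _) hKnn
    have hgron := norm_le_gronwallBound_of_norm_deriv_right_le hfc
      (fun x hx => (hfd x (Set.Ico_subset_Icc_self hx)).hasDerivWithinAt) hf0 hbound
    have hfa := hgron a (Set.right_mem_Icc.mpr ha0.le)
    rw [gronwallBound_ε0_δ0] at hfa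
    have hΦa0 : |Φ (t₀ - a)| ≤ 0 := by
      have h1 : |Φ (t₀ - a)| ≤ ‖f a‖ := by
        rw [show ‖f a‖ = max |Φ (t₀ - a)| |deriv Φ (t₀ - a)| by
          simp [hfdef, Prod.norm_def, Real.norm_eq_abs]]
        exact le_max_left _ _
      linarith
    have hposa : 0 < Φ (t₀ - a) := hbefore (t₀ - a) (by linarith) (by linarith)
    have := le_trans (le_abs_self _) hΦa0
    linarith

/-- The derivative of the solution is nonpositive on `(0,∞)`. -/
private lemma deriv_nonpos_sl {A Φ : ℝ → ℝ} (hApos : ∀ t > (0:ℝ), 0 < A t)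
    (h : IsSL A Φ) (hpos : ∀ t, 0 ≤ t → 0 < Φ t) :
    ∀ t, 0 < t → deriv Φ t ≤ 0 := by
  obtain ⟨hc, ⟨M, hM⟩, h0, hdiff, hd2⟩ := h
  intro t ht
  by_contra hcon
  push_neg at hcon
  have hmono : ∀ T, MonotoneOn (deriv Φ) (Set.Icc t T) := by
    intro T
    apply monotoneOn_of_deriv_nonneg (convex_Icc _ _)
    · exact fun y hy =>
        ((hd2 y (lt_of_lt_of_le ht hy.1)).differentiableAt.continuousAt).continuousWithinAt
    · intro y hy
      rw [interior_Icc] at hy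
      exact (hd2 y (lt_of_lt_of_le ht hy.1.le)).differentiableAt.differentiableWithinAt
    · intro y hy
      rw [interior_Icc] at hy
      have hy0 : 0 < y := lt_trans ht hy.1
      rw [(hd2 y hy0).deriv]
      exact mul_nonneg (hApos y hy0).le (hpos y hy0.le).le
  have hall : ∀ y, t ≤ y → deriv (fun x => -Φ x) y ≤ -(deriv Φ t) := by
    intro y hy
    rw [deriv.fun_neg]
    have := hmono y (Set.left_mem_Icc.mpr hy) (Set.right_mem_Icc.mpr hy) hy
    linarith
  exact no_neg_deriv_bound (Φ := fun x => -Φ x) (M := M)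
    (fun s hs => by simpa using hM s hs)
    (fun s hs => (hdiff s hs).neg) ht (by linarith) hall

theorem ratio_of_solutions_nonincreasing
    (A₁ A₂ Φ₁ Φ₂ : ℝ → ℝ) (hA₁ : SLHyp A₁) (hA₂ : SLHyp A₂)
    (hle : ∀ t > (0:ℝ), A₂ t ≤ A₁ t)
    (h1 : IsSL A₁ Φ₁) (h2 : IsSL A₂ Φ₂) :
    (∀ s t : ℝ, 0 ≤ s → s ≤ t → Φ₁ t * Φ₂ s ≤ Φ₂ t * Φ₁ s) ∧
    AntitoneOn (fun t => Φ₁ t / Φ₂ t) (Set.Ici 0) := by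
  obtain ⟨hA₁c, hA₁pos, -, -⟩ := hA₁
  obtain ⟨hA₂c, hA₂pos, -, -⟩ := hA₂
  have hpos₁ := phi_pos hA₁c hA₁pos h1
  have hpos₂ := phi_pos hA₂c hA₂pos h2
  have hdnp₁ := deriv_nonpos_sl hA₁pos h1 hpos₁
  have hdnp₂ := deriv_nonpos_sl hA₂pos h2 hpos₂
  obtain ⟨hc₁, ⟨M₁, hM₁⟩, h0₁, hdiff₁, hd2₁⟩ := h1
  obtain ⟨hc₂, ⟨M₂, hM₂⟩, h0₂, hdiff₂, hd2₂⟩ := h2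
  set W : ℝ → ℝ := fun t => deriv Φ₁ t * Φ₂ t - deriv Φ₂ t * Φ₁ t with hW
  have hWd : ∀ t > (0:ℝ), HasDerivAt W ((A₁ t - A₂ t) * (Φ₁ t * Φ₂ t)) t := by
    intro t ht
    have e1 := (hd2₁ t ht).mul (hdiff₂ t ht).hasDerivAt
    have e2 := (hd2₂ t ht).mul (hdiff₁ t ht).hasDerivAt
    have e3 := e1.sub e2
    exact e3.congr_deriv (by ring)
  have hWle : ∀ t > (0:ℝ), W t ≤ 0 := by
    intro s₀ hs₀
    by_contra hcon
    push_neg at hcon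
    have hM₁pos : 0 < M₁ := by
      have := hM₁ 0 le_rfl
      rw [h0₁] at this
      simpa using lt_of_lt_of_le one_pos (by simpa using this)
    have hWmono : ∀ T, MonotoneOn W (Set.Icc s₀ T) := by
      intro T
      apply monotoneOn_of_deriv_nonneg (convex_Icc _ _)
      · exact fun y hy =>
          ((hWd y (lt_of_lt_of_le hs₀ hy.1)).differentiableAt.continuousAt).continuousWithinAt
      · intro y hy
        rw [interior_Icc] at hy
        exact (hWd y (lt_of_lt_of_le hs₀ hy.1.le)).differentiableAt.differentiableWithinAt
      · intro y hy
        rw [interior_Icc] at hy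
        have hy0 : 0 < y := lt_trans hs₀ hy.1
        rw [(hWd y hy0).deriv]
        exact mul_nonneg (sub_nonneg.mpr (hle y hy0))
          (mul_pos (hpos₁ y hy0.le) (hpos₂ y hy0.le)).le
    have hWge : ∀ t, s₀ ≤ t → W s₀ ≤ W t := fun t htt =>
      (hWmono t) (Set.left_mem_Icc.mpr htt) (Set.right_mem_Icc.mpr htt) htt
    have hd2le : ∀ t, s₀ ≤ t → deriv Φ₂ t ≤ -(W s₀ / M₁) := by
      intro t htt
      have ht0 : 0 < t := lt_of_lt_of_le hs₀ htt
      have h1' : deriv Φ₁ t * Φ₂ t ≤ 0 :=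
        mul_nonpos_iff.mpr (Or.inr ⟨hdnp₁ t ht0, (hpos₂ t ht0.le).le⟩)
      have h2' : W s₀ ≤ -deriv Φ₂ t * Φ₁ t := by
        have hwt := hWge t htt
        have : W t = deriv Φ₁ t * Φ₂ t - deriv Φ₂ t * Φ₁ t := rfl
        nlinarith [hwt, h1']
      have hd2nn : 0 ≤ -deriv Φ₂ t := by linarith [hdnp₂ t ht0]
      have hΦ₁le : Φ₁ t ≤ M₁ := le_trans (le_abs_self _) (hM₁ t ht0.le)
      have h3' : W s₀ ≤ -deriv Φ₂ t * M₁ :=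
        le_trans h2' (mul_le_mul_of_nonneg_left hΦ₁le hd2nn)
      have h4' : W s₀ / M₁ ≤ -deriv Φ₂ t := (div_le_iff₀ hM₁pos).mpr h3'
      linarith
    exact no_neg_deriv_bound hM₂ hdiff₂ hs₀
      (neg_lt_zero.mpr (div_pos hcon hM₁pos)) hd2le
  have hanti : AntitoneOn (fun t => Φ₁ t / Φ₂ t) (Set.Ici 0) := by
    apply antitoneOn_of_deriv_nonpos (convex_Ici 0)
    · exact ContinuousOn.div hc₁ hc₂ (fun x hx => (hpos₂ x hx).ne')
    · intro x hx
      rw [interior_Ici] at hx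
      exact ((hdiff₁ x hx).div (hdiff₂ x hx) (hpos₂ x hx.le).ne').differentiableWithinAt
    · intro x hx
      rw [interior_Ici] at hx
      rw [deriv_fun_div (hdiff₁ x hx) (hdiff₂ x hx) (hpos₂ x hx.le).ne']
      apply div_nonpos_of_nonpos_of_nonneg
      · have hnum : deriv Φ₁ x * Φ₂ x - Φ₁ x * deriv Φ₂ x = W x := by
          simp only [hW]
          ring
        rw [hnum]
        exact hWle x hx
      · positivity
  refine ⟨?_, hanti⟩
  intro s t hs hst
  have ht0 : (0:ℝ) ≤ t := le_trans hs hst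
  have h := hanti hs ht0 hst
  rw [div_le_div_iff₀ (hpos₂ t ht0) (hpos₂ s hs)] at h
  nlinarith [h]
end
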